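/- arXiv:2412.17648 — 4 statements merged into one kernel-verified Lean document; each statement's English description precedes it below -/
import Mathlib

section
/- If a graph G is word-representable, then it is k-word-representable for some k; i.e., there exists a k-uniform word (every letter occurs exactly k times) over the vertex set representing G. -/
section Defs

variable {V : Type*}

/-- Two letters alternate in a word: the subword over `{a,b}` has no equal consecutive letters. -/
def Alternates [DecidableEq V] (w : List V) (a b : V) : Prop :=
  (w.filter (fun x => decide (x = a ∨ x = b))).Chain' (· ≠ ·)

/-- A word over the vertex set represents a graph: every vertex occurs, and two distinct
vertices are adjacent iff they alternate in the word. -/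
def Represents [DecidableEq V] (w : List V) (G : SimpleGraph V) : Prop :=
  (∀ v : V, v ∈ w) ∧ ∀ a b : V, a ≠ b → (G.Adj a b ↔ Alternates w a b)

def WordRepresentable [DecidableEq V] (G : SimpleGraph V) : Prop :=
  ∃ w : List V, Represents w G

/-- Every letter occurs exactly `k` times. -/
def IsKUniform [DecidableEq V] (w : List V) (k : ℕ) : Prop :=
  ∀ v : V, w.count v = k

/-- `k` is the representation number of `G`. -/
def RepNumIs [DecidableEq V] (G : SimpleGraph V) (k : ℕ) : Prop :=
  IsLeast {n : ℕ | ∃ w : List V, IsKUniform w n ∧ Represents w G} k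

/-- `p` is a permutation of the vertex set (as a list). -/
def IsPermOn (p : List V) : Prop := p.Nodup ∧ ∀ v : V, v ∈ p

/-- `G` is representable by a concatenation of `k` permutations of its vertex set. -/
def PermRepresents [DecidableEq V] (G : SimpleGraph V) (k : ℕ) : Prop :=
  ∃ ps : List (List V), ps.length = k ∧ (∀ p ∈ ps, IsPermOn p) ∧ Represents ps.flatten G

/-- `k` is the permutation-representation number of `G`. -/
def PrnIs [DecidableEq V] (G : SimpleGraph V) (k : ℕ) : Prop :=
  IsLeast {n : ℕ | PermRepresents G n} k

/-- A comparability graph: a graph admitting a transitive orientation of its edges. -/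
def IsComparability (G : SimpleGraph V) : Prop :=
  ∃ lt : V → V → Prop, Transitive lt ∧ (∀ a b, lt a b → G.Adj a b) ∧
    (∀ a b, G.Adj a b → (lt a b ↔ ¬ lt b a))

/-- A module: every outside vertex is adjacent to all of `M` or to none of `M`. -/
def IsModule (G : SimpleGraph V) (M : Set V) : Prop :=
  ∀ x ∉ M, (∀ m ∈ M, G.Adj x m) ∨ (∀ m ∈ M, ¬ G.Adj x m)

end Defs

/-- The graph obtained from `G` by replacing the vertex `a` with the module `M`. -/
def substGraph {W V' : Type*} (G : SimpleGraph W) (a : W) (M : SimpleGraph V') :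
    SimpleGraph ({x : W // x ≠ a} ⊕ V') where
  Adj x y :=
    match x, y with
    | Sum.inl u, Sum.inl v => G.Adj u.1 v.1
    | Sum.inl u, Sum.inr _ => G.Adj u.1 a
    | Sum.inr _, Sum.inl v => G.Adj a v.1
    | Sum.inr u, Sum.inr v => M.Adj u v
  symm := by
    constructor
    rintro (u | u) (v | v) h
    · exact h.symm
    · exact h.symm
    · exact h.symm
    · exact h.symm
  loopless := by
    constructor
    rintro (u | u) h
    · exact G.irrefl h
    · exact M.irrefl h

/-- The quotient graph of a modular partition: parts are adjacent iff completely adjacent. -/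
def quotientGraph {V : Type*} (G : SimpleGraph V) {n : ℕ} (Mod : Fin n → Set V) :
    SimpleGraph (Fin n) where
  Adj i j := i ≠ j ∧ ∀ a ∈ Mod i, ∀ b ∈ Mod j, G.Adj a b
  symm := by
    constructor
    rintro i j ⟨hij, h⟩
    exact ⟨hij.symm, fun a ha b hb => (h b hb a ha).symm⟩
  loopless := by constructor; rintro i ⟨h, _⟩; exact h rfl

/-- The lexicographical product of two graphs. -/
def lexProd {V V' : Type*} (G : SimpleGraph V) (G' : SimpleGraph V') :
    SimpleGraph (V × V') where
  Adj x y := G.Adj x.1 y.1 ∨ (x.1 = y.1 ∧ G'.Adj x.2 y.2)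
  symm := by
    constructor
    rintro ⟨a, a'⟩ ⟨b, b'⟩ (h | ⟨h1, h2⟩)
    · exact Or.inl h.symm
    · exact Or.inr ⟨h1.symm, h2.symm⟩
  loopless := by
    constructor
    rintro ⟨a, a'⟩ (h | ⟨_, h⟩)
    · exact G.irrefl h
    · exact G'.irrefl h

section Aux

variable {V : Type*} [DecidableEq V]

/-- The list of first occurrences of letters in `w`, in order of first occurrence. -/
def fo : List V → List V
  | [] => []
  | x :: t => x :: (fo t).filter (fun y => decide (y ≠ x))

@[simp] lemma mem_fo {w : List V} {v : V} : v ∈ fo w ↔ v ∈ w := by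
  induction w with
  | nil => simp [fo]
  | cons x t ih =>
    simp only [fo, List.mem_cons, List.mem_filter, ih, decide_eq_true_eq]
    constructor
    · rintro (rfl | ⟨h, _⟩)
      · exact Or.inl rfl
      · exact Or.inr h
    · rintro (rfl | h)
      · exact Or.inl rfl
      · by_cases hx : v = x
        · exact Or.inl hx
        · exact Or.inr ⟨h, hx⟩

lemma nodup_fo (w : List V) : (fo w).Nodup := by
  induction w with
  | nil => simp [fo]
  | cons x t ih =>
    refine List.nodup_cons.2 ⟨?_, ih.filter _⟩
    simp

lemma filter_fo (P : V → Bool) (w : List V) :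
    (fo w).filter P = fo (w.filter P) := by
  induction w with
  | nil => simp [fo]
  | cons x t ih =>
    show ((x :: (fo t).filter (fun y => decide (y ≠ x))).filter P) = fo ((x :: t).filter P)
    rw [List.filter_cons (xs := t)]
    by_cases hx : P x = true
    · rw [if_pos hx]
      show ((x :: (fo t).filter (fun y => decide (y ≠ x))).filter P)
          = x :: (fo (t.filter P)).filter (fun y => decide (y ≠ x))
      rw [List.filter_cons, if_pos hx]
      congr 1
      rw [List.filter_comm, ih]
    · rw [if_neg hx, List.filter_cons, if_neg hx]
      rw [List.filter_comm, ih]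
      apply List.filter_eq_self.2
      intro y hy
      have : y ∈ t.filter P := mem_fo.1 hy
      have hyP : P y = true := (List.mem_filter.1 this).2
      have : y ≠ x := fun h => hx (h ▸ hyP)
      simpa using this

lemma singleton_of_nodup {l : List V} {c : V} (hn : l.Nodup) (hall : ∀ z ∈ l, z = c)
    (hc : c ∈ l) : l = [c] := by
  cases l with
  | nil => simp at hc
  | cons z t =>
    have hz : z = c := hall z (List.mem_cons_self)
    subst hz
    cases t with
    | nil => rfl
    | cons u t' =>
      have hu : u = z := hall u (by simp)
      exfalso
      exact (List.nodup_cons.1 hn).1 (by simp [hu])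

/-- In an alternating binary word starting with `x`, `x` occurs at least as often as `y`. -/
lemma alt_count_aux : ∀ (t : List V) (x y : V), List.Chain' (· ≠ ·) (x :: t) →
    (∀ z ∈ t, z = x ∨ z = y) → y ≠ x → (x :: t).count y ≤ (x :: t).count x
  | [], x, y, _, _, hyx => by simp [List.count_cons, hyx, Ne.symm hyx]
  | [z], x, y, hch, hmem, hyx => by
    rcases hmem z (by simp) with rfl | rfl
    · simp [List.count_cons, hyx, Ne.symm hyx]
    · simp [List.count_cons, hyx, Ne.symm hyx]
  | z :: u :: t3, x, y, hch, hmem, hyx => by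
    have hxz : x ≠ z := (List.isChain_cons_cons.1 hch).1
    have hch2 : List.Chain' (· ≠ ·) (z :: u :: t3) := (List.isChain_cons_cons.1 hch).2
    have hzu : z ≠ u := (List.isChain_cons_cons.1 hch2).1
    have hz : z = y := by
      rcases hmem z (by simp) with h | h
      · exact absurd h.symm hxz
      · exact h
    have hu : u = x := by
      rcases hmem u (by simp) with h | h
      · exact h
      · exfalso; rw [hz] at hzu; exact hzu h.symm
    have hch3 : List.Chain' (· ≠ ·) (u :: t3) := (List.isChain_cons_cons.1 hch2).2
    rw [hu] at hch3
    have hrec := alt_count_aux t3 x y hch3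
      (fun w hw => hmem w (by simp [hw])) hyx
    rw [hz, hu]
    simp only [List.count_cons, beq_iff_eq, hyx, Ne.symm hyx, if_false, if_true,
      if_pos rfl, if_neg hyx, if_neg (Ne.symm hyx)] at hrec ⊢
    omega

lemma alt_count {F : List V} {x y : V} (hch : List.Chain' (· ≠ ·) F)
    (hmem : ∀ z ∈ F, z = x ∨ z = y) (hh : F.head? = some x) (hyx : y ≠ x) :
    F.count y ≤ F.count x := by
  cases F with
  | nil => simp at hh
  | cons f t =>
    have hf : f = x := by simpa using hh
    subst hf
    exact alt_count_aux t f y hch (fun z hz => hmem z (List.mem_cons_of_mem _ hz)) hyx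

/-- Key step: prepending the first occurrences of the low-count letters preserves
representation. -/
lemma step_represents {G : SimpleGraph V} {w : List V} (k : ℕ) (hw : Represents w G) :
    Represents ((fo w).filter (fun v => decide (w.count v < k)) ++ w) G := by
  constructor
  · intro v
    exact List.mem_append_right _ (hw.1 v)
  · intro a b hab
    rw [hw.2 a b hab]
    unfold Alternates
    rw [List.filter_append]
    set P : V → Bool := fun x => decide (x = a ∨ x = b) with hP
    set Pc : V → Bool := fun v => decide (w.count v < k) with hPc
    set F := w.filter P with hF
    have haF : a ∈ F := List.mem_filter.2 ⟨hw.1 a, by simp [hP]⟩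
    have hbF : b ∈ F := List.mem_filter.2 ⟨hw.1 b, by simp [hP]⟩
    have hmemF : ∀ z ∈ F, z = a ∨ z = b := by
      intro z hz
      have := (List.mem_filter.1 hz).2
      simpa [hP] using this
    -- rewrite the prefix filter
    have hq : ((fo w).filter Pc).filter P = (fo F).filter Pc := by
      rw [List.filter_comm, filter_fo]
    rw [hq]
    -- F is nonempty
    obtain ⟨f0, Ft, hFe⟩ : ∃ f0 Ft, F = f0 :: Ft := by
      cases hFc : F with
      | nil => rw [hFc] at haF; simp at haF
      | cons f0 Ft => exact ⟨f0, Ft, rfl⟩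
    have hf0 : f0 = a ∨ f0 = b := hmemF f0 (hFe ▸ List.mem_cons_self)
    obtain ⟨oth, hothspec⟩ : ∃ oth : V, (f0 = a ∧ oth = b) ∨ (f0 = b ∧ oth = a) := by
      rcases hf0 with h | h
      · exact ⟨b, Or.inl ⟨h, rfl⟩⟩
      · exact ⟨a, Or.inr ⟨h, rfl⟩⟩
    have hothne : oth ≠ f0 := by
      rcases hothspec with ⟨h1, h2⟩ | ⟨h1, h2⟩ <;> rw [h1, h2]
      · exact Ne.symm hab
      · exact hab
    have hothmem : oth ∈ F := by
      rcases hothspec with ⟨h1, h2⟩ | ⟨h1, h2⟩ <;> rw [h2]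
      · exact hbF
      · exact haF
    have hmemF' : ∀ z ∈ F, z = f0 ∨ z = oth := by
      intro z hz
      rcases hothspec with ⟨h1, h2⟩ | ⟨h1, h2⟩ <;> rw [h1, h2] <;>
        rcases hmemF z hz with h' | h'
      · exact Or.inl h'
      · exact Or.inr h'
      · exact Or.inr h'
      · exact Or.inl h'
    have hothFt : oth ∈ Ft := by
      have := hothmem
      rw [hFe] at this
      rcases List.mem_cons.1 this with h | h
      · exact absurd h hothne
      · exact h
    -- compute fo F
    have hfoF : fo F = [f0, oth] := by
      rw [hFe]
      show f0 :: (fo Ft).filter (fun y => decide (y ≠ f0)) = [f0, oth]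
      congr 1
      apply singleton_of_nodup ((nodup_fo Ft).filter _)
      · intro z hz
        have hz1 : z ∈ Ft := mem_fo.1 (List.mem_filter.1 hz).1
        have hz2 : z ≠ f0 := by simpa using (List.mem_filter.1 hz).2
        rcases hmemF' z (hFe ▸ List.mem_cons_of_mem _ hz1) with h | h
        · exact absurd h hz2
        · exact h
      · exact List.mem_filter.2 ⟨mem_fo.2 hothFt, by simpa using hothne⟩
    rw [hfoF]
    -- counts in F equal counts in w for a, b
    have hcount : ∀ v, v = a ∨ v = b → F.count v = w.count v := by
      intro v hv
      have hPv : P v = true := by simp [hP, hv]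
      rw [hF, List.count_filter hPv]
    have hcf0 : F.count f0 = w.count f0 := hcount f0 hf0
    have hcoth : F.count oth = w.count oth := by
      apply hcount
      rcases hothspec with ⟨h1, h2⟩ | ⟨h1, h2⟩
      · exact Or.inr h2
      · exact Or.inl h2
    have hheadF : F.head? = some f0 := by rw [hFe]; rfl
    -- case analysis on which letters are kept in the prefix
    constructor
    · intro hAlt
      have hq2 : ([f0, oth].filter Pc) =
          if Pc f0 then (if Pc oth then [f0, oth] else [f0])
          else (if Pc oth then [oth] else []) := by
        by_cases h1 : Pc f0 <;> by_cases h2 : Pc oth <;>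
          simp [List.filter_cons, h1, h2]
      rw [hq2]
      by_cases h1 : Pc f0 = true <;> by_cases h2 : Pc oth = true
      · rw [if_pos h1, if_pos h2, hFe]
        exact List.isChain_cons_cons.2 ⟨Ne.symm hothne,
          List.isChain_cons_cons.2 ⟨hothne, hFe ▸ hAlt⟩⟩
      · -- f0 kept, oth dropped: impossible by the majority argument
        exfalso
        have hmaj := alt_count hAlt hmemF' hheadF hothne
        have h1' : w.count f0 < k := by simpa [hPc] using h1
        have h2' : ¬ w.count oth < k := by simpa [hPc] using h2
        omega
      · rw [if_neg h1, if_pos h2, hFe]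
        exact List.isChain_cons_cons.2 ⟨hothne, hFe ▸ hAlt⟩
      · rw [if_neg h1, if_neg h2]
        exact hAlt
    · intro h
      exact (List.isChain_append.1 h).2.1

lemma uniformize {G : SimpleGraph V} [Fintype V] (k : ℕ) :
    ∀ (n : ℕ) (w : List V), Represents w G → (∀ v, w.count v ≤ k) →
      (∑ v : V, (k - w.count v)) ≤ n → ∃ w', IsKUniform w' k ∧ Represents w' G := by
  intro n
  induction n with
  | zero =>
    intro w hw hle hsum
    refine ⟨w, fun v => ?_, hw⟩
    have h0 : k - w.count v = 0 := by
      have := Finset.sum_eq_zero_iff.1 (Nat.le_zero.1 hsum) v (Finset.mem_univ v)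
      exact this
    have := hle v
    omega
  | succ n ih =>
    intro w hw hle hsum
    by_cases hz : ∑ v : V, (k - w.count v) = 0
    · refine ⟨w, fun v => ?_, hw⟩
      have h0 : k - w.count v = 0 := Finset.sum_eq_zero_iff.1 hz v (Finset.mem_univ v)
      have := hle v
      omega
    · set p := (fo w).filter (fun v => decide (w.count v < k)) with hp
      have hrep := step_represents k hw
      have hcnt : ∀ v, (p ++ w).count v = (if w.count v < k then 1 else 0) + w.count v := by
        intro v
        rw [List.count_append]
        by_cases hv : w.count v < k
        · rw [if_pos hv]
          have h1 : p.count v = 1 := by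
            rw [hp, List.count_filter (by simp [hv])]
            exact List.count_eq_one_of_mem (nodup_fo w) (mem_fo.2 (hw.1 v))
          omega
        · rw [if_neg hv]
          have h0 : p.count v = 0 := List.count_eq_zero_of_not_mem (by
            rw [hp]
            intro hm
            exact hv (by simpa using (List.mem_filter.1 hm).2))
          omega
      have hle' : ∀ v, (p ++ w).count v ≤ k := by
        intro v
        rw [hcnt v]
        have := hle v
        by_cases hv : w.count v < k <;> simp [hv] <;> omega
      apply ih (p ++ w) hrep hle'
      have hlt : (∑ v : V, (k - (p ++ w).count v)) < ∑ v : V, (k - w.count v) := by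
        obtain ⟨v0, _, hv0⟩ := Finset.exists_ne_zero_of_sum_ne_zero hz
        apply Finset.sum_lt_sum
        · intro i _
          rw [hcnt i]
          by_cases hv : w.count i < k <;> simp [hv] <;> omega
        · refine ⟨v0, Finset.mem_univ v0, ?_⟩
          rw [hcnt v0]
          have : w.count v0 < k := by omega
          simp only [this, if_pos]
          omega
      omega

end Aux

/-- a word-representable graph is `k`-word-representable for some `k`. -/
theorem stmt0 {V : Type*} [DecidableEq V] [Fintype V] (G : SimpleGraph V)
    (h : WordRepresentable G) :
    ∃ (k : ℕ) (w : List V), IsKUniform w k ∧ Represents w G := by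
  obtain ⟨w, hw⟩ := h
  set k := Finset.univ.sup (fun v : V => w.count v) with hk
  have hle : ∀ v, w.count v ≤ k :=
    fun v => Finset.le_sup (f := fun v : V => w.count v) (Finset.mem_univ v)
  obtain ⟨w', hu, hr⟩ := uniformize k (∑ v : V, (k - w.count v)) w hw hle le_rfl
  exact ⟨k, w', hu, hr⟩
end

section
/- A graph is permutationally representable (representable by a word that is a concatenation of permutations of its vertex set) if and only if it is a comparability graph (admits a transitive orientation). -/
namespace Stmt3Aux
variable {V : Type*} [DecidableEq V]

lemma filter_pr_comm (a b : V) (t : List V) :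
    t.filter (fun x => decide (x = a ∨ x = b)) = t.filter (fun x => decide (x = b ∨ x = a)) :=
  List.filter_congr (fun x _ => by simp [decide_eq_decide, or_comm])

lemma filter_single {a b : V} : ∀ {t : List V}, t.Nodup → a ∉ t → b ∈ t →
    t.filter (fun x => decide (x = a ∨ x = b)) = [b]
  | [], _, _, hb => absurd hb (List.not_mem_nil)
  | y :: r, hnd, ha, hb => by
    by_cases hyb : y = b
    · have hb' : b ∉ r := hyb ▸ (List.nodup_cons.mp hnd).1
      have h0 : r.filter (fun x => decide (x = a ∨ x = b)) = [] := by
        apply List.filter_eq_nil_iff.mpr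
        intro x hx
        simp only [decide_eq_true_eq]
        rintro (rfl | rfl)
        · exact ha (List.mem_cons_of_mem _ hx)
        · exact hb' hx
      rw [List.filter_cons_of_pos (by simp [hyb]), h0, hyb]
    · have hya : y ≠ a := fun h => ha (h ▸ List.mem_cons_self)
      rw [List.filter_cons_of_neg (by simp [hya, hyb])]
      have hbr : b ∈ r := by
        rcases List.mem_cons.mp hb with h | h
        · exact absurd h.symm hyb
        · exact h
      exact filter_single (List.nodup_cons.mp hnd).2 (fun h => ha (List.mem_cons_of_mem _ h)) hbr

lemma filter_eq_iff_idx {a b : V} (hab : a ≠ b) : ∀ {p : List V}, p.Nodup → a ∈ p → b ∈ p →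
    (p.filter (fun x => decide (x = a ∨ x = b)) = [a, b] ↔ p.idxOf a < p.idxOf b)
  | [], _, ha, _ => absurd ha (List.not_mem_nil)
  | x :: t, hnd, ha, hb => by
    by_cases hxa : x = a
    · have hat : a ∉ t := hxa ▸ (List.nodup_cons.mp hnd).1
      have hbt : b ∈ t := by
        rcases List.mem_cons.mp hb with h | h
        · exact absurd (hxa.symm.trans h.symm) hab
        · exact h
      have h1 : t.filter (fun x => decide (x = a ∨ x = b)) = [b] :=
        filter_single (List.nodup_cons.mp hnd).2 hat hbt
      rw [List.filter_cons_of_pos (by simp [hxa]), h1, hxa]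
      constructor
      · intro _
        rw [List.idxOf_cons_self, List.idxOf_cons_ne _ hab]
        exact Nat.succ_pos _
      · intro _; rfl
    · by_cases hxb : x = b
      · have hbt : b ∉ t := hxb ▸ (List.nodup_cons.mp hnd).1
        have hat : a ∈ t := by
          rcases List.mem_cons.mp ha with h | h
          · exact absurd (hxb.symm.trans h.symm) (Ne.symm hab)
          · exact h
        have h1 : t.filter (fun x => decide (x = a ∨ x = b)) = [a] := by
          rw [filter_pr_comm]
          exact filter_single (List.nodup_cons.mp hnd).2 hbt hat
        rw [List.filter_cons_of_pos (by simp [hxb]), h1, hxb]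
        constructor
        · intro h; exact absurd (List.head_eq_of_cons_eq h) (Ne.symm hab)
        · intro h
          rw [List.idxOf_cons_self, List.idxOf_cons_ne _ (Ne.symm hab)] at h
          exact absurd h (Nat.not_lt_zero _)
      · rw [List.filter_cons_of_neg (by simp [hxa, hxb])]
        have hat : a ∈ t := by
          rcases List.mem_cons.mp ha with h | h
          · exact absurd h.symm hxa
          · exact h
        have hbt : b ∈ t := by
          rcases List.mem_cons.mp hb with h | h
          · exact absurd h.symm hxb
          · exact h
        rw [List.idxOf_cons_ne _ hxa, List.idxOf_cons_ne _ hxb]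
        rw [filter_eq_iff_idx hab (List.nodup_cons.mp hnd).2 hat hbt]
        exact ⟨Nat.succ_lt_succ, Nat.lt_of_succ_lt_succ⟩

lemma filter_pair {a b : V} (hab : a ≠ b) {p : List V} (hnd : p.Nodup) (ha : a ∈ p) (hb : b ∈ p) :
    p.filter (fun x => decide (x = a ∨ x = b)) = [a, b] ∨
      p.filter (fun x => decide (x = a ∨ x = b)) = [b, a] := by
  rcases Nat.lt_or_ge (p.idxOf a) (p.idxOf b) with h | h
  · exact Or.inl ((filter_eq_iff_idx hab hnd ha hb).mpr h)
  · right
    rw [filter_pr_comm]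
    apply (filter_eq_iff_idx hab.symm hnd hb ha).mpr
    rcases Nat.lt_or_eq_of_le h with h' | h'
    · exact h'
    · exact absurd ((List.idxOf_inj hb).mp h') (Ne.symm hab)

lemma chain'_eq_iff_all {α : Type*} (x : α) : ∀ (l : List α),
    List.Chain' (· = ·) (x :: l) ↔ ∀ y ∈ l, y = x
  | [] => by simp [List.Chain']
  | y :: l => by
    rw [List.Chain', List.isChain_cons_cons, ← List.Chain', chain'_eq_iff_all y l]
    constructor
    · rintro ⟨rfl, h⟩ z hz
      rcases List.mem_cons.mp hz with rfl | hz'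
      · rfl
      · exact h z hz'
    · intro h
      have hxy : y = x := h y (List.mem_cons_self)
      exact ⟨hxy.symm, fun z hz => (h z (List.mem_cons_of_mem _ hz)).trans hxy.symm⟩

lemma chain'_blocks {a b : V} (hab : a ≠ b) : ∀ (bs : List (List V)),
    (∀ q ∈ bs, q = [a, b] ∨ q = [b, a]) →
    (bs.flatten.Chain' (· ≠ ·) ↔ bs.Chain' (· = ·))
  | [], _ => by simp [List.Chain']
  | [q], h => by
    rcases h q (List.mem_cons_self) with rfl | rfl <;>
      simp [hab, hab.symm, List.Chain']
  | q1 :: q2 :: bs, h => by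
    have h1 := h q1 (List.mem_cons_self)
    have h2 := h q2 (List.mem_cons_of_mem _ (List.mem_cons_self))
    have IH := chain'_blocks hab (q2 :: bs) (fun q hq => h q (List.mem_cons_of_mem _ hq))
    have hne2 : ([a, b] : List V) ≠ [b, a] := fun h => hab (List.head_eq_of_cons_eq h)
    rcases h1 with rfl | rfl <;> rcases h2 with h2 | h2 <;> subst h2 <;>
      rw [List.flatten_cons, List.Chain', List.Chain', List.isChain_append, List.isChain_cons_cons (l := bs)]
    · constructor
      · rintro ⟨_, hc, _⟩
        exact ⟨by trivial, IH.mp hc⟩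
      · rintro ⟨_, hc⟩
        refine ⟨by simp [hab], IH.mpr hc, ?_⟩
        intro x hx y hy
        simp at hx hy
        subst hx; subst hy
        exact hab.symm
    · constructor
      · rintro ⟨_, _, hlast⟩
        exact absurd (hlast b (by simp) b (by simp [List.flatten_cons]) rfl) (fun h => h)
      · rintro ⟨heq, _⟩
        exact absurd heq hne2
    · constructor
      · rintro ⟨_, _, hlast⟩
        exact absurd (hlast a (by simp) a (by simp [List.flatten_cons]) rfl) (fun h => h)
      · rintro ⟨heq, _⟩
        exact absurd heq hne2.symm
    · constructor
      · rintro ⟨_, hc, _⟩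
        exact ⟨by trivial, IH.mp hc⟩
      · rintro ⟨_, hc⟩
        refine ⟨by simp [hab.symm], IH.mpr hc, ?_⟩
        intro x hx y hy
        simp at hx hy
        subst hx; subst hy
        exact hab

lemma alt_iff_idx {a b : V} (hab : a ≠ b) (ps : List (List V)) (hps : ∀ p ∈ ps, IsPermOn p) :
    Alternates ps.flatten a b ↔
      ((∀ p ∈ ps, p.idxOf a < p.idxOf b) ∨ (∀ p ∈ ps, p.idxOf b < p.idxOf a)) := by
  have hmem : ∀ p ∈ ps, p.Nodup ∧ a ∈ p ∧ b ∈ p :=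
    fun p hp => ⟨(hps p hp).1, (hps p hp).2 a, (hps p hp).2 b⟩
  have hmap : ps.flatten.filter (fun x => decide (x = a ∨ x = b)) =
      (ps.map (fun p => p.filter (fun x => decide (x = a ∨ x = b)))).flatten := by
    induction ps with
    | nil => rfl
    | cons p rest ih => simp_all [List.filter_append]
  have hblocks : ∀ q ∈ ps.map (fun p => p.filter (fun x => decide (x = a ∨ x = b))),
      q = [a, b] ∨ q = [b, a] := by
    intro q hq
    rcases List.mem_map.mp hq with ⟨p, hp, rfl⟩
    obtain ⟨h1, h2, h3⟩ := hmem p hp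
    exact filter_pair hab h1 h2 h3
  unfold Alternates
  rw [hmap, chain'_blocks hab _ hblocks]
  have key : ∀ p ∈ ps, (p.idxOf a < p.idxOf b ↔
      p.filter (fun x => decide (x = a ∨ x = b)) = [a, b]) := by
    intro p hp
    obtain ⟨h1, h2, h3⟩ := hmem p hp
    exact (filter_eq_iff_idx hab h1 h2 h3).symm
  have key' : ∀ p ∈ ps, (p.idxOf b < p.idxOf a ↔
      p.filter (fun x => decide (x = a ∨ x = b)) = [b, a]) := by
    intro p hp
    obtain ⟨h1, h2, h3⟩ := hmem p hp
    rw [filter_pr_comm]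
    exact (filter_eq_iff_idx hab.symm h1 h3 h2).symm
  cases ps with
  | nil => simp [List.Chain']
  | cons p rest =>
    rw [List.map_cons, chain'_eq_iff_all]
    obtain ⟨h1, h2, h3⟩ := hmem p (List.mem_cons_self)
    constructor
    · intro hall
      rcases filter_pair hab h1 h2 h3 with hF | hF
      · left
        intro q hq
        rcases List.mem_cons.mp hq with rfl | hq'
        · exact (key q hq).mpr hF
        · refine (key q hq).mpr ?_
          have := hall _ (List.mem_map_of_mem hq')
          rw [this, hF]
      · right
        intro q hq
        rcases List.mem_cons.mp hq with rfl | hq'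
        · exact (key' q hq).mpr hF
        · refine (key' q hq).mpr ?_
          have := hall _ (List.mem_map_of_mem hq')
          rw [this, hF]
    · intro hall y hy
      rcases List.mem_map.mp hy with ⟨q, hq', rfl⟩
      rcases hall with hall | hall
      · rw [(key q (List.mem_cons_of_mem _ hq')).mp (hall q (List.mem_cons_of_mem _ hq')),
          (key p (List.mem_cons_self)).mp (hall p (List.mem_cons_self))]
      · rw [(key' q (List.mem_cons_of_mem _ hq')).mp (hall q (List.mem_cons_of_mem _ hq')),
          (key' p (List.mem_cons_self)).mp (hall p (List.mem_cons_self))]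

lemma idx_lt_of_pairwise {S : V → V → Prop} {p : List V} (pw : p.Pairwise S) (hnd : p.Nodup)
    {a b : V} (ha : a ∈ p) (hb : b ∈ p) (hS : S a b) (hnS : ¬ S b a) (hne : a ≠ b) :
    p.idxOf a < p.idxOf b := by
  rcases Nat.lt_or_ge (p.idxOf a) (p.idxOf b) with h | h
  · exact h
  rcases Nat.lt_or_eq_of_le h with h' | h'
  · exfalso
    apply hnS
    have hia : p.idxOf a < p.length := List.idxOf_lt_length_iff.mpr ha
    have hib : p.idxOf b < p.length := List.idxOf_lt_length_iff.mpr hb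
    have := (List.pairwise_iff_getElem.mp pw) _ _ hib hia h'
    rwa [List.getElem_idxOf, List.getElem_idxOf] at this
  · exact absurd ((List.idxOf_inj hb).mp h') (Ne.symm hne)

lemma exists_perm_ext [Fintype V] (r : V → V → Prop) (htrans : Transitive r)
    (hirr : ∀ a, ¬ r a a) :
    ∃ p : List V, IsPermOn p ∧ ∀ a b, r a b → p.idxOf a < p.idxOf b := by
  classical
  set r' : V → V → Prop := fun a b => r a b ∨ a = b with hr'
  haveI : IsPartialOrder V r' :=
    { refl := fun a => Or.inr rfl
      trans := by
        rintro a b c (hab | rfl) (hbc | rfl)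
        · exact Or.inl (htrans hab hbc)
        · exact Or.inl hab
        · exact Or.inl hbc
        · exact Or.inr rfl
      antisymm := by
        rintro a b (hab | rfl) (hba | hba)
        · exact absurd (htrans hab hba) (hirr a)
        · exact hba.symm
        · rfl
        · rfl }
  obtain ⟨s, hs, hrs⟩ := extend_partialOrder r'
  haveI := hs
  set le : V → V → Bool := fun x y => decide (s x y) with hle
  set p : List V := Finset.univ.toList.mergeSort le with hp
  have hperm : p.Perm Finset.univ.toList := List.mergeSort_perm _ _
  have hnd : p.Nodup := hperm.nodup_iff.mpr (Finset.nodup_toList _)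
  have hmem : ∀ v : V, v ∈ p := fun v =>
    hperm.mem_iff.mpr (Finset.mem_toList.mpr (Finset.mem_univ v))
  have hsorted : p.Pairwise (le · ·) := by
    apply List.pairwise_mergeSort
    · intro a b c h1 h2
      simp only [hle, decide_eq_true_eq] at h1 h2 ⊢
      exact _root_.trans h1 h2
    · intro a b
      rcases Std.Total.total (r := s) a b with h | h <;> simp [hle, h]
  have pw : p.Pairwise (fun x y => s x y) := by
    refine hsorted.imp ?_
    intro x y h
    simpa [hle] using h
  refine ⟨p, ⟨hnd, hmem⟩, ?_⟩
  intro a b hab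
  have hne : a ≠ b := fun h => hirr a (h ▸ hab)
  have hsab : s a b := hrs a b (Or.inl hab)
  have hnsba : ¬ s b a := fun h => hne (antisymm hsab h)
  exact idx_lt_of_pairwise pw hnd (hmem a) (hmem b) hsab hnsba hne

lemma exists_perm_ext_pair [Fintype V] (lt : V → V → Prop) (htr : Transitive lt)
    (hirr : ∀ a, ¬ lt a a) (u v : V) (huv : u ≠ v) (hnu : ¬ lt u v) (hnv : ¬ lt v u) :
    ∃ p : List V, IsPermOn p ∧ (∀ a b, lt a b → p.idxOf a < p.idxOf b) ∧
      p.idxOf u < p.idxOf v := by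
  set r : V → V → Prop := fun a b => lt a b ∨ ((lt a u ∨ a = u) ∧ (lt v b ∨ v = b)) with hr
  have hvu : ∀ {x : V}, (lt v x ∨ v = x) → (lt x u ∨ x = u) → False := by
    rintro x (h1 | rfl) (h2 | rfl)
    · exact hnv (htr h1 h2)
    · exact hnv h1
    · exact hnv h2
    · exact huv rfl
  have htrans : Transitive r := by
    rintro a b c (hab | ⟨hau, hvb⟩) (hbc | ⟨hbu, hvc⟩)
    · exact Or.inl (htr hab hbc)
    · refine Or.inr ⟨?_, hvc⟩
      rcases hbu with h | rfl
      · exact Or.inl (htr hab h)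
      · exact Or.inl hab
    · refine Or.inr ⟨hau, ?_⟩
      rcases hvb with h | rfl
      · exact Or.inl (htr h hbc)
      · exact Or.inl hbc
    · exact (hvu hvb hbu).elim
  have hirr' : ∀ a, ¬ r a a := by
    rintro a (ha | ⟨hau, hva⟩)
    · exact hirr a ha
    · exact hvu hva hau
  obtain ⟨p, hp, hidx⟩ := exists_perm_ext r htrans hirr'
  refine ⟨p, hp, fun a b hab => hidx a b (Or.inl hab), ?_⟩
  exact hidx u v (Or.inr ⟨Or.inr rfl, Or.inr rfl⟩)

end Stmt3Aux

/-- a graph is permutationally representable iff it is a comparability graph. -/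
theorem stmt3 {V : Type*} [DecidableEq V] [Fintype V] (G : SimpleGraph V) :
    (∃ k : ℕ, PermRepresents G k) ↔ IsComparability G := by
  constructor
  · rintro ⟨k, ps, hlen, hperm, hmem, hadj⟩
    refine ⟨fun a b => a ≠ b ∧ ∀ p ∈ ps, p.idxOf a < p.idxOf b, ?_, ?_, ?_⟩
    · rintro a b c ⟨hab, h1⟩ ⟨hbc, h2⟩
      obtain ⟨p0, hp0, hap0⟩ := List.mem_flatten.mp (hmem a)
      refine ⟨?_, fun p hp => lt_trans (h1 p hp) (h2 p hp)⟩
      rintro rfl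
      exact absurd (lt_trans (h1 p0 hp0) (h2 p0 hp0)) (lt_irrefl _)
    · rintro a b ⟨hab, h1⟩
      exact (hadj a b hab).mpr ((Stmt3Aux.alt_iff_idx hab ps hperm).mpr (Or.inl h1))
    · intro a b hGadj
      have hab : a ≠ b := hGadj.ne
      have halt := (hadj a b hab).mp hGadj
      obtain ⟨p0, hp0, _⟩ := List.mem_flatten.mp (hmem a)
      rcases (Stmt3Aux.alt_iff_idx hab ps hperm).mp halt with hall | hall
      · constructor
        · rintro _ ⟨hba, h2⟩
          exact absurd (lt_trans (hall p0 hp0) (h2 p0 hp0)) (lt_irrefl _)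
        · intro _; exact ⟨hab, hall⟩
      · constructor
        · rintro ⟨_, h1⟩ _
          exact absurd (lt_trans (h1 p0 hp0) (hall p0 hp0)) (lt_irrefl _)
        · intro hn
          exact (hn ⟨hab.symm, hall⟩).elim
  · rintro ⟨lt, htr, hltadj, hor⟩
    classical
    have hirr : ∀ a, ¬ lt a a := fun a h => G.irrefl (hltadj a a h)
    have hAdjlt : ∀ a b, G.Adj a b → lt a b ∨ lt b a := by
      intro a b h
      by_cases hba : lt b a
      · exact Or.inr hba
      · exact Or.inl ((hor a b h).mpr hba)
    have hexists : ∀ u v : V, ∃ p : List V, IsPermOn p ∧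
        (∀ a b, lt a b → p.idxOf a < p.idxOf b) ∧
        (u ≠ v → ¬ G.Adj u v → p.idxOf u < p.idxOf v) := by
      intro u v
      by_cases h : u ≠ v ∧ ¬ G.Adj u v
      · obtain ⟨p, h1, h2, h3⟩ := Stmt3Aux.exists_perm_ext_pair lt htr hirr u v h.1
          (fun hl => h.2 (hltadj _ _ hl)) (fun hl => h.2 ((hltadj _ _ hl).symm))
        exact ⟨p, h1, h2, fun _ _ => h3⟩
      · obtain ⟨p, h1, h2⟩ := Stmt3Aux.exists_perm_ext lt htr hirr
        exact ⟨p, h1, h2, fun h1' h2' => absurd ⟨h1', h2'⟩ h⟩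
    choose f hf1 hf2 hf3 using hexists
    set ps : List (List V) := (Finset.univ : Finset (V × V)).toList.map (fun z => f z.1 z.2)
      with hps
    have hpsmem : ∀ u v : V, f u v ∈ ps := fun u v =>
      List.mem_map.mpr ⟨(u, v), Finset.mem_toList.mpr (Finset.mem_univ _), rfl⟩
    have hperm : ∀ p ∈ ps, IsPermOn p := by
      intro p hp
      rcases List.mem_map.mp hp with ⟨z, _, rfl⟩
      exact hf1 z.1 z.2
    refine ⟨ps.length, ps, rfl, hperm, ?_, ?_⟩
    · intro v
      exact List.mem_flatten.mpr ⟨f v v, hpsmem v v, (hf1 v v).2 v⟩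
    · intro a b hab
      rw [Stmt3Aux.alt_iff_idx hab ps hperm]
      constructor
      · intro hGadj
        rcases hAdjlt a b hGadj with h | h
        · left; intro p hp
          rcases List.mem_map.mp hp with ⟨z, _, rfl⟩
          exact hf2 z.1 z.2 a b h
        · right; intro p hp
          rcases List.mem_map.mp hp with ⟨z, _, rfl⟩
          exact hf2 z.1 z.2 b a h
      · intro hall
        by_contra hnadj
        have hba : ¬ G.Adj b a := fun h => hnadj h.symm
        have i1 : (f a b).idxOf a < (f a b).idxOf b := hf3 a b hab hnadj
        have i2 : (f b a).idxOf b < (f b a).idxOf a := hf3 b a hab.symm hba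
        rcases hall with hall | hall
        · exact absurd (hall (f b a) (hpsmem b a)) (Nat.lt_asymm i2)
        · exact absurd (hall (f a b) (hpsmem a b)) (Nat.lt_asymm i1)
end

section
/- A finite simple graph G is a comparability graph if and only if there exists a finite family of linear orders on its vertex set such that two distinct vertices a, b are adjacent in G iff a and b are comparable the same way in all the linear orders (i.e., either a < b in every order or b < a in every order). -/
noncomputable def linOfRel {V : Type*} (s : V → V → Prop) (h : IsLinearOrder V s) :
    LinearOrder V := by
  classical
  haveI := h
  exact
    { le := s
      lt := fun a b => s a b ∧ ¬ s b a
      le_refl := fun a => refl_of s a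
      le_trans := fun a b c hab hbc => trans_of s hab hbc
      le_antisymm := fun a b hab hba => antisymm hab hba
      le_total := fun a b => total_of s a b
      lt_iff_le_not_ge := fun _ _ => Iff.rfl
      toDecidableLE := Classical.decRel _ }

theorem linOfRel_lt {V : Type*} (s : V → V → Prop) (h : IsLinearOrder V s) (x y : V) :
    (linOfRel s h).lt x y ↔ s x y ∧ ¬ s y x := Iff.rfl

theorem extend_strict {V : Type*} (s : V → V → Prop) (htr : Transitive s)
    (hirr : ∀ x, ¬ s x x) : ∃ L : LinearOrder V, ∀ x y, s x y → L.lt x y := by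
  classical
  set le : V → V → Prop := fun x y => s x y ∨ x = y with hle
  haveI : IsPartialOrder V le :=
    { refl := fun a => Or.inr rfl
      trans := by
        rintro a b c (h1 | rfl) (h2 | rfl)
        · exact Or.inl (htr h1 h2)
        · exact Or.inl h1
        · exact Or.inl h2
        · exact Or.inr rfl
      antisymm := by
        rintro a b (h1 | rfl) h2
        · rcases h2 with h2 | rfl
          · exact absurd (htr h1 h2) (hirr a)
          · rfl
        · rfl }
  obtain ⟨t, hlin, hts⟩ := extend_partialOrder le
  refine ⟨linOfRel t hlin, fun x y hxy => ?_⟩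
  have hne : x ≠ y := fun h => hirr x (h ▸ hxy)
  rw [linOfRel_lt]
  refine ⟨hts _ _ (Or.inl hxy), fun h => ?_⟩
  haveI := hlin
  exact hne (antisymm (hts _ _ (Or.inl hxy)) h)

theorem ext_pair {V : Type*} (r : V → V → Prop) (htr : Transitive r)
    (hirr : ∀ x, ¬ r x x) (a b : V) :
    ∃ L : LinearOrder V, (∀ x y, r x y → L.lt x y) ∧
      (a ≠ b → ¬ r a b → ¬ r b a → L.lt a b) := by
  by_cases hab : a ≠ b ∧ ¬ r a b ∧ ¬ r b a
  · obtain ⟨hne, hrab, hrba⟩ := hab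
    set s : V → V → Prop :=
      fun x y => r x y ∨ ((r x a ∨ x = a) ∧ (r b y ∨ b = y)) with hs
    have stran : Transitive s := by
      rintro x y z (h1 | ⟨h1a, h1b⟩) (h2 | ⟨h2a, h2b⟩)
      · exact Or.inl (htr h1 h2)
      · refine Or.inr ⟨?_, h2b⟩
        rcases h2a with h2a | rfl
        · exact Or.inl (htr h1 h2a)
        · exact Or.inl h1
      · refine Or.inr ⟨h1a, ?_⟩
        rcases h1b with h1b | rfl
        · exact Or.inl (htr h1b h2)
        · exact Or.inl h2
      · exact Or.inr ⟨h1a, h2b⟩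
    have sirr : ∀ x, ¬ s x x := by
      rintro x (h | ⟨hxa | rfl, hbx | rfl⟩)
      · exact hirr x h
      · exact hrba (htr hbx hxa)
      · exact hrba hxa
      · exact hrba hbx
      · exact hne rfl
    obtain ⟨L, hL⟩ := extend_strict s stran sirr
    refine ⟨L, fun x y hxy => hL x y (Or.inl hxy), fun _ _ _ => ?_⟩
    exact hL a b (Or.inr ⟨Or.inr rfl, Or.inr rfl⟩)
  · obtain ⟨L, hL⟩ := extend_strict r htr hirr
    refine ⟨L, hL, fun h1 h2 h3 => absurd ⟨h1, h2, h3⟩ hab⟩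


theorem stmt4' {V : Type*} [DecidableEq V] [Fintype V] (G : SimpleGraph V) :
    (∃ lt : V → V → Prop, Transitive lt ∧ (∀ a b, lt a b → G.Adj a b) ∧
      (∀ a b, G.Adj a b → (lt a b ↔ ¬ lt b a))) ↔
      ∃ (n : ℕ) (L : Fin n → LinearOrder V), 1 ≤ n ∧
        ∀ a b : V, a ≠ b →
          (G.Adj a b ↔ ((∀ i, (L i).lt a b) ∨ (∀ i, (L i).lt b a))) := by
  classical
  constructor
  · rintro ⟨lt, htr, hor, hiff⟩
    have hirr : ∀ x, ¬ lt x x := fun x h => G.loopless.irrefl x (hor x x h)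
    set m := Fintype.card (V × V) with hm
    set e := Fintype.equivFin (V × V) with he
    set C : V × V → LinearOrder V := fun p => (ext_pair lt htr hirr p.1 p.2).choose with hC
    set D : LinearOrder V := (extend_strict lt htr hirr).choose with hD
    set L : Fin (m + 1) → LinearOrder V :=
      fun i => if h : (i : ℕ) < m then C (e.symm ⟨i, h⟩) else D with hLdef
    have hext : ∀ (i : Fin (m + 1)) x y, lt x y → (L i).lt x y := by
      intro i x y hxy
      by_cases h : (i : ℕ) < m
      · have hLeq : L i = C (e.symm ⟨i, h⟩) := dif_pos h
        rw [hLeq]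
        exact (ext_pair lt htr hirr _ _).choose_spec.1 x y hxy
      · have hLeq : L i = D := dif_neg h
        rw [hLeq]
        exact (extend_strict lt htr hirr).choose_spec x y hxy
    have hpair : ∀ a b : V, a ≠ b → ¬ lt a b → ¬ lt b a → ∃ i, (L i).lt a b := by
      intro a b hne h1 h2
      have hlt : ((e (a, b)) : ℕ) < m := (e (a, b)).isLt
      refine ⟨⟨(e (a, b) : ℕ), Nat.lt_succ_of_lt hlt⟩, ?_⟩
      have hsy : e.symm ⟨((e (a, b)) : ℕ), hlt⟩ = (a, b) := by
        rw [show (⟨((e (a, b)) : ℕ), hlt⟩ : Fin m) = e (a, b) from Fin.ext rfl]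
        exact Equiv.symm_apply_apply _ _
      have hLeq : L ⟨(e (a, b) : ℕ), Nat.lt_succ_of_lt hlt⟩ = C (a, b) := by
        calc L ⟨(e (a, b) : ℕ), Nat.lt_succ_of_lt hlt⟩
            = C (e.symm ⟨((e (a, b)) : ℕ), hlt⟩) := dif_pos hlt
          _ = C (a, b) := by rw [hsy]
      rw [hLeq]
      exact (ext_pair lt htr hirr a b).choose_spec.2 hne h1 h2
    refine ⟨m + 1, L, Nat.succ_le_succ (Nat.zero_le _), fun a b hne => ?_⟩
    constructor
    · intro hadj
      by_cases h : lt a b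
      · exact Or.inl fun i => hext i a b h
      · have : lt b a := by
          by_contra h'
          exact ((hiff a b hadj).mpr (fun h2 => h' h2) |> h)
        exact Or.inr fun i => hext i b a this
    · rintro (h | h)
      · by_contra hadj
        have h1 : ¬ lt a b := fun hl => hadj (hor a b hl)
        have h2 : ¬ lt b a := fun hl => hadj ((hor b a hl).symm)
        obtain ⟨i, hi⟩ := hpair b a hne.symm h2 h1
        letI := L i
        exact absurd (h i) (asymm hi)
      · by_contra hadj
        have h1 : ¬ lt a b := fun hl => hadj (hor a b hl)
        have h2 : ¬ lt b a := fun hl => hadj ((hor b a hl).symm)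
        obtain ⟨i, hi⟩ := hpair a b hne h1 h2
        letI := L i
        exact absurd (h i) (asymm hi)
  · rintro ⟨n, L, hn, h⟩
    obtain ⟨i0⟩ : Nonempty (Fin n) := ⟨⟨0, hn⟩⟩
    refine ⟨fun a b => G.Adj a b ∧ ∀ i, (L i).lt a b, ?_, fun a b h' => h'.1, ?_⟩
    · rintro a b c ⟨hab, h1⟩ ⟨hbc, h2⟩
      have h3 : ∀ i, (L i).lt a c := fun i => by
        letI := L i; exact lt_trans (h1 i) (h2 i)
      have hne : a ≠ c := by
        letI := L i0; exact ne_of_lt (h3 i0)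
      exact ⟨(h a c hne).mpr (Or.inl h3), h3⟩
    · intro a b hadj
      have hne := G.ne_of_adj hadj
      constructor
      · rintro ⟨_, h1⟩ ⟨_, h2⟩
        letI := L i0
        exact absurd (h1 i0) (asymm (h2 i0))
      · intro hnb
        rcases (h a b hne).mp hadj with h1 | h1
        · exact ⟨hadj, h1⟩
        · exact absurd ⟨hadj.symm, h1⟩ hnb

/-- `G` is a comparability graph iff there is a nonempty finite family of linear
orders on `V` such that two distinct vertices are adjacent iff they compare the same way in
all the orders. -/
theorem stmt4 {V : Type*} [DecidableEq V] [Fintype V] (G : SimpleGraph V) :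
    IsComparability G ↔
      ∃ (n : ℕ) (L : Fin n → LinearOrder V), 1 ≤ n ∧
        ∀ a b : V, a ≠ b →
          (G.Adj a b ↔ ((∀ i, (L i).lt a b) ∨ (∀ i, (L i).lt b a))) :=
  stmt4' G
end

section
/- Let G = (V ∪ {a}, E) be a word-representable graph with representation number k (smallest k such that G has a k-uniform representing word) and M a comparability graph with permutation-representation number k' (smallest number of permutations whose concatenation represents M). Then the representation number of G_a[M] equals max{k, k'}. -/
set_option linter.unusedSectionVars false
set_option maxHeartbeats 1000000


namespace Stmt8Aux
open List
attribute [local instance 2000] instBEqOfDecidableEq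

variable {α : Type*} [DecidableEq α]

lemma chain'_cons' {β : Type*} {R : β → β → Prop} {x : β} {l : List β} :
    Chain' R (x :: l) ↔ (∀ y ∈ l.head?, R x y) ∧ Chain' R l := isChain_cons

lemma chain'_cons {β : Type*} {R : β → β → Prop} {x y : β} {l : List β} :
    Chain' R (x :: y :: l) ↔ R x y ∧ Chain' R (y :: l) := isChain_cons_cons

lemma chain'_append {β : Type*} {R : β → β → Prop} {l₁ l₂ : List β} :
    Chain' R (l₁ ++ l₂) ↔ Chain' R l₁ ∧ Chain' R l₂ ∧
      ∀ x ∈ l₁.getLast?, ∀ y ∈ l₂.head?, R x y := isChain_append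

lemma _root_.List.Chain'.tail {β : Type*} {R : β → β → Prop} {l : List β}
    (h : Chain' R l) : Chain' R l.tail := IsChain.tail h

lemma count_cons_of_ne₀ {a b : α} (h : a ≠ b) {l : List α} : count a (b :: l) = count a l :=
  count_cons_of_ne h.symm

/-- alternating pattern x y x y ... of length 2n -/
def pat : ℕ → α → α → List α
  | 0, _, _ => []
  | n+1, x, y => x :: y :: pat n x y

@[simp] lemma pat_zero (x y : α) : pat 0 x y = [] := rfl
@[simp] lemma pat_succ (n : ℕ) (x y : α) : pat (n+1) x y = x :: y :: pat n x y := rfl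

lemma count_pat_left {x y : α} (h : x ≠ y) (n : ℕ) : count x (pat n x y) = n := by
  induction n with
  | zero => simp
  | succ n ih => simp [count_cons, ih, h, h.symm]

lemma count_pat_right {x y : α} (h : x ≠ y) (n : ℕ) : count y (pat n x y) = n := by
  induction n with
  | zero => simp
  | succ n ih => simp [count_cons, ih, h.symm, h]

lemma mem_pat {x y c : α} : ∀ {n : ℕ}, c ∈ pat n x y → c = x ∨ c = y := by
  intro n
  induction n with
  | zero => simp
  | succ n ih =>
    intro h
    rw [pat_succ, mem_cons, mem_cons] at h
    rcases h with h|h|h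
    · exact Or.inl h
    · exact Or.inr h
    · exact ih h

lemma head?_pat {x y : α} {n : ℕ} (h : 0 < n) : (pat n x y).head? = some x := by
  cases n with
  | zero => omega
  | succ n => rfl

lemma pat_ne_nil {x y : α} {n : ℕ} (h : 0 < n) : pat n x y ≠ [] := by
  cases n with
  | zero => omega
  | succ n => simp

lemma getLast?_pat {x y : α} : ∀ {n : ℕ}, 0 < n → (pat n x y).getLast? = some y := by
  intro n
  induction n with
  | zero => omega
  | succ n ih =>
    intro _
    cases n with
    | zero => rfl
    | succ m =>
      rw [pat_succ, getLast?_cons_cons, pat_succ, getLast?_cons_cons, ← pat_succ]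
      exact ih (Nat.succ_pos m)

lemma chain'_pat {x y : α} (h : x ≠ y) (n : ℕ) : Chain' (· ≠ ·) (pat n x y) := by
  induction n with
  | zero => exact isChain_nil
  | succ n ih =>
    rw [pat_succ, chain'_cons', chain'_cons']
    refine ⟨?_, ⟨?_, ih⟩⟩
    · intro z hz; simp at hz; subst hz; exact h
    · intro z hz
      cases n with
      | zero => simp [pat] at hz
      | succ m => rw [head?_pat (Nat.succ_pos m)] at hz
                  simp at hz; subst hz; exact h.symm

lemma pat_append_pair {x y : α} : ∀ (n : ℕ), pat n x y ++ [x, y] = pat (n+1) x y := by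
  intro n
  induction n with
  | zero => rfl
  | succ n ih => simp only [pat_succ, cons_append, ih]

lemma dedup_pat {x y : α} (h : x ≠ y) : ∀ {n : ℕ}, 0 < n → (pat n x y).dedup = [x, y] := by
  intro n
  induction n with
  | zero => omega
  | succ n ih =>
    intro _
    cases n with
    | zero => simp [pat, dedup_cons_of_notMem, h]
    | succ m =>
      have hx : x ∈ y :: pat (m+1) x y := by
        simp [pat]
      have hy : y ∈ pat (m+1) x y := by simp [pat]
      rw [pat_succ, dedup_cons_of_mem hx, dedup_cons_of_mem hy]
      exact ih (Nat.succ_pos m)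


lemma alt_char {x y : α} (hxy : x ≠ y) :
    ∀ l : List α, (∀ c ∈ l, c = x ∨ c = y) → Chain' (· ≠ ·) l →
      count x l = count y l →
      l = pat (count x l) x y ∨ l = pat (count x l) y x := by
  suffices H : ∀ n (l : List α), l.length = n → (∀ c ∈ l, c = x ∨ c = y) →
      Chain' (· ≠ ·) l → count x l = count y l →
      l = pat (count x l) x y ∨ l = pat (count x l) y x from
    fun l => H l.length l rfl
  intro n
  induction n using Nat.strong_induction_on with
  | _ n ih =>
    intro l hlen hmem hch hcnt
    match l with
    | [] => left; simp
    | [c] =>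
      exfalso
      rcases hmem c (by simp) with rfl | rfl
      · simp [count_cons, hxy, hxy.symm] at hcnt
      · simp [count_cons, hxy, hxy.symm] at hcnt
    | c1 :: c2 :: rest =>
      have h12 : c1 ≠ c2 := (chain'_cons.1 hch).1
      have hch2 : Chain' (· ≠ ·) (c2 :: rest) := (chain'_cons.1 hch).2
      have hchr : Chain' (· ≠ ·) rest := hch2.tail
      have hmr : ∀ c ∈ rest, c = x ∨ c = y := fun c hc => hmem c (by simp [hc])
      have hhead : ∀ z ∈ rest.head?, c2 ≠ z := (chain'_cons'.1 hch2).1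
      have hlt : rest.length < n := by simp at hlen; omega
      have hc1 := hmem c1 (by simp)
      have hc2 := hmem c2 (by simp)
      have hcase : (x = c1 ∧ y = c2) ∨ (y = c1 ∧ x = c2) := by
        rcases hc1 with h1|h1 <;> rcases hc2 with h2|h2
        · exact absurd (h1.trans h2.symm) h12
        · exact Or.inl ⟨h1.symm, h2.symm⟩
        · exact Or.inr ⟨h1.symm, h2.symm⟩
        · exact absurd (h1.trans h2.symm) h12
      rcases hcase with ⟨rfl, rfl⟩ | ⟨rfl, rfl⟩
      · have hcntr : count x rest = count y rest := by
          simp only [count_cons, hxy, hxy.symm, if_true, if_false, if_neg, if_pos] at hcnt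
          simp [count_cons, hxy, hxy.symm] at hcnt
          omega
        have hcx : count x (x :: y :: rest) = count x rest + 1 := by
          simp [count_cons, hxy, hxy.symm]
        rcases ih rest.length hlt rest rfl hmr hchr hcntr with hp | hp
        · left; rw [hcx, pat_succ, ← hp]
        · by_cases hj : count x rest = 0
          · left
            have hrnil : rest = [] := by rw [hj] at hp; simpa using hp
            rw [hcx, hj, hrnil, pat_succ, pat_zero]
          · exfalso
            have h0 : 0 < count x rest := Nat.pos_of_ne_zero hj
            have hhd : rest.head? = some y := by rw [hp]; exact head?_pat h0
            exact hhead y (Option.mem_def.2 hhd) rfl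
      · have hcntr : count x rest = count y rest := by
          simp [count_cons, hxy, hxy.symm] at hcnt
          omega
        have hcx : count x (y :: x :: rest) = count x rest + 1 := by
          simp [count_cons, hxy, hxy.symm]
        rcases ih rest.length hlt rest rfl hmr hchr hcntr with hp | hp
        · by_cases hj : count x rest = 0
          · right
            have hrnil : rest = [] := by rw [hj] at hp; simpa using hp
            rw [hcx, hj, hrnil, pat_succ, pat_zero]
          · exfalso
            have h0 : 0 < count x rest := Nat.pos_of_ne_zero hj
            have hhd : rest.head? = some x := by rw [hp]; exact head?_pat h0
            exact hhead x (Option.mem_def.2 hhd) rfl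
        · right; rw [hcx, pat_succ, ← hp]

lemma alt_count_le {x y : α} (hxy : x ≠ y) :
    ∀ l : List α, (∀ c ∈ l, c = x ∨ c = y) → Chain' (· ≠ ·) l →
      count x l ≤ count y l + 1 := by
  suffices H : ∀ n (l : List α), l.length = n → (∀ c ∈ l, c = x ∨ c = y) →
      Chain' (· ≠ ·) l → count x l ≤ count y l + 1 from
    fun l => H l.length l rfl
  intro n
  induction n using Nat.strong_induction_on with
  | _ n ih =>
    intro l hlen hmem hch
    match l with
    | [] => simp
    | [c] =>
      rcases hmem c (by simp) with rfl | rfl <;>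
        simp [count_cons, hxy, hxy.symm]
    | c1 :: c2 :: rest =>
      have h12 : c1 ≠ c2 := (chain'_cons.1 hch).1
      have hchr : Chain' (· ≠ ·) rest := ((chain'_cons.1 hch).2).tail
      have hmr : ∀ c ∈ rest, c = x ∨ c = y := fun c hc => hmem c (by simp [hc])
      have hlt : rest.length < n := by simp at hlen; omega
      have hc1 := hmem c1 (by simp)
      have hc2 := hmem c2 (by simp)
      have hcase : (x = c1 ∧ y = c2) ∨ (y = c1 ∧ x = c2) := by
        rcases hc1 with h1|h1 <;> rcases hc2 with h2|h2
        · exact absurd (h1.trans h2.symm) h12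
        · exact Or.inl ⟨h1.symm, h2.symm⟩
        · exact Or.inr ⟨h1.symm, h2.symm⟩
        · exact absurd (h1.trans h2.symm) h12
      have hb := ih rest.length hlt rest rfl hmr hchr
      rcases hcase with ⟨rfl, rfl⟩ | ⟨rfl, rfl⟩ <;>
        simp [count_cons, hxy, hxy.symm] <;> omega

lemma alt_head_ne_getLast {x y : α} (hxy : x ≠ y) {l : List α}
    (hmem : ∀ c ∈ l, c = x ∨ c = y) (hch : Chain' (· ≠ ·) l)
    (hcnt : count x l = count y l) :
    ∀ p ∈ l.head?, ∀ q ∈ l.getLast?, p ≠ q := by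
  rcases alt_char hxy l hmem hch hcnt with h | h
  · rcases Nat.eq_zero_or_pos (count x l) with hj | hj
    · rw [h, hj]; simp
    · rw [h, head?_pat hj, getLast?_pat hj]
      rintro p hp q hq
      simp only [Option.mem_def, Option.some_inj] at hp hq
      subst hp; subst hq; exact hxy
  · rcases Nat.eq_zero_or_pos (count x l) with hj | hj
    · rw [h, hj]; simp
    · rw [h, head?_pat hj, getLast?_pat hj]
      rintro p hp q hq
      simp only [Option.mem_def, Option.some_inj] at hp hq
      subst hp; subst hq; exact hxy.symm

lemma chain'_rot {x y : α} (hxy : x ≠ y) {l₁ l₂ : List α}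
    (hmem : ∀ c ∈ l₁ ++ l₂, c = x ∨ c = y)
    (hcnt : count x (l₁ ++ l₂) = count y (l₁ ++ l₂))
    (h : Chain' (· ≠ ·) (l₁ ++ l₂)) : Chain' (· ≠ ·) (l₂ ++ l₁) := by
  rcases chain'_append.1 h with ⟨h1, h2, _⟩
  refine chain'_append.2 ⟨h2, h1, ?_⟩
  intro p hp q hq
  have hl2 : (l₁ ++ l₂).getLast? = some p := by
    rw [getLast?_append, Option.mem_def.1 hp]; rfl
  have hh : (l₁ ++ l₂).head? = some q := by
    rw [head?_append, Option.mem_def.1 hq]; rfl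
  exact (alt_head_ne_getLast hxy hmem h hcnt q (Option.mem_def.2 hh)
    p (Option.mem_def.2 hl2)).symm

lemma chain'_map_ne_iff {β : Type*} (g : α → β) {x y : α} (hg : g x ≠ g y) :
    ∀ l : List α, (∀ c ∈ l, c = x ∨ c = y) →
      (Chain' (· ≠ ·) (l.map g) ↔ Chain' (· ≠ ·) l) := by
  have hxy : x ≠ y := fun h => hg (h ▸ rfl)
  have key : ∀ c z : α, (c = x ∨ c = y) → (z = x ∨ z = y) → (g c ≠ g z ↔ c ≠ z) := by
    rintro c z (rfl|rfl) (rfl|rfl) <;> simp [hg, hg.symm, hxy, hxy.symm]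
  intro l
  induction l with
  | nil => exact fun _ => ⟨fun _ => isChain_nil, fun _ => isChain_nil⟩
  | cons c t ih =>
    intro hmem
    rw [map_cons, chain'_cons', chain'_cons',
      ih (fun c hc => hmem c (mem_cons_of_mem _ hc))]
    have hc := hmem c (by simp)
    refine and_congr_left' ?_
    rw [head?_map]
    cases ht : t.head? with
    | none => simp
    | some z =>
      have hz : z ∈ t := mem_of_mem_head? (Option.mem_def.2 ht)
      simp only [Option.map_some, Option.mem_def, Option.some_inj]
      simpa using key c z hc (hmem z (mem_cons_of_mem _ hz))



lemma mem_of_mem_filter_pair {x y : α} {l : List α} :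
    ∀ c ∈ l.filter (fun z => decide (z = x ∨ z = y)), c = x ∨ c = y := by
  intro c hc
  simpa using of_decide_eq_true (mem_filter.1 hc).2

lemma count_filter_pair_left (x y : α) (l : List α) :
    count x (l.filter (fun z => decide (z = x ∨ z = y))) = count x l :=
  count_filter (by simp)

lemma count_filter_pair_right (x y : α) (l : List α) :
    count y (l.filter (fun z => decide (z = x ∨ z = y))) = count y l :=
  count_filter (by simp)

lemma alternates_rotate {x y : α} (hxy : x ≠ y) {l₁ l₂ : List α}
    (hcnt : count x (l₁ ++ l₂) = count y (l₁ ++ l₂))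
    (h : Alternates (l₁ ++ l₂) x y) : Alternates (l₂ ++ l₁) x y := by
  unfold Alternates at h ⊢
  rw [filter_append] at h ⊢
  apply chain'_rot hxy ?_ ?_ h
  · intro c hc
    rcases mem_append.1 hc with hc | hc <;> exact mem_of_mem_filter_pair c hc
  · rw [← filter_append, count_filter_pair_left, count_filter_pair_right]; exact hcnt

lemma alternates_rotate_iff {x y : α} (hxy : x ≠ y) {l₁ l₂ : List α}
    (hcnt : count x (l₁ ++ l₂) = count y (l₁ ++ l₂)) :
    Alternates (l₁ ++ l₂) x y ↔ Alternates (l₂ ++ l₁) x y := by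
  refine ⟨alternates_rotate hxy hcnt, alternates_rotate hxy ?_⟩
  rw [count_append, count_append] at hcnt ⊢; omega

lemma filter_filterMap_eq {A B : Type*} (μ : A → Option B) (P : B → Bool) (Q : A → Bool)
    (g : A → B)
    (h : ∀ a, (μ a).bind (fun b => if P b then some b else none)
          = if Q a then some (g a) else none) :
    ∀ w : List A, (w.filterMap μ).filter P = (w.filter Q).map g := by
  intro w
  induction w with
  | nil => rfl
  | cons a w ih =>
    have ha := h a
    cases hμ : μ a with
    | none =>
      rw [hμ, Option.bind_none] at ha
      cases hQ : Q a with
      | true => rw [hQ] at ha; simp at ha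
      | false =>
        rw [filterMap_cons, hμ, filter_cons, hQ]
        simpa using ih
    | some b =>
      rw [hμ, Option.bind_some] at ha
      cases hP : P b with
      | true =>
        rw [hP, if_pos rfl] at ha
        cases hQ : Q a with
        | false => rw [hQ] at ha; simp at ha
        | true =>
          rw [hQ, if_pos rfl] at ha
          have hb : b = g a := by injection ha
          rw [filterMap_cons, hμ, filter_cons, hP, filter_cons, hQ]
          simp only [if_true, map_cons]
          rw [hb, ih]
      | false =>
        have hQ : Q a = false := by
          cases hQ : Q a
          · rfl
          · rw [hP, if_neg (by simp), hQ, if_pos rfl] at ha; simp at ha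
        rw [filterMap_cons, hμ, filter_cons, hP, filter_cons, hQ]
        simpa using ih

lemma count_filterMap_eq {A B : Type*} [DecidableEq A] [DecidableEq B] (μ : A → Option B)
    (z' : A) (z : B) (h : ∀ a, μ a = some z ↔ a = z') :
    ∀ w : List A, count z (w.filterMap μ) = count z' w := by
  intro w
  induction w with
  | nil => rfl
  | cons a w ih =>
    cases hμ : μ a with
    | none =>
      have hne : a ≠ z' := fun he => by rw [(h a).2 he] at hμ; cases hμ
      simp [filterMap_cons, hμ, ih, count_cons, hne]
    | some b =>
      by_cases hb : b = z
      · subst hb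
        have he : a = z' := (h a).1 hμ
        subst he
        simp [filterMap_cons, hμ, ih, count_cons]
      · have hne : a ≠ z' := fun he =>
          hb (Option.some_inj.1 (hμ.symm.trans ((h a).2 he)))
        simp [filterMap_cons, hμ, ih, count_cons, hb, hne]

lemma alternates_filterMap {A B : Type*} [DecidableEq A] [DecidableEq B] (μ : A → Option B)
    {x' y' : A} {x y : B} (hx'y' : x' ≠ y') (hxy : x ≠ y)
    (h2 : μ x' = some x) (h3 : μ y' = some y)
    (h1 : ∀ a, a ≠ x' → a ≠ y' → ∀ b, μ a = some b → b ≠ x ∧ b ≠ y)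
    (w : List A) : Alternates (w.filterMap μ) x y ↔ Alternates w x' y' := by
  have key : (w.filterMap μ).filter (fun z => decide (z = x ∨ z = y)) =
      (w.filter (fun z => decide (z = x' ∨ z = y'))).map (fun a => if a = x' then x else y) := by
    apply filter_filterMap_eq
    intro a
    by_cases hax : a = x'
    · subst hax; rw [h2]; simp
    · by_cases hay : a = y'
      · subst hay; rw [h3]; simp [hax, Ne.symm hax, hxy.symm]
      · cases hμ : μ a with
        | none => simp [hax, hay]
        | some b =>
          obtain ⟨hbx, hby⟩ := h1 a hax hay b hμ
          simp [hax, hay, hbx, hby]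
  unfold Alternates
  rw [key]
  exact chain'_map_ne_iff _ (by simp [hx'y', Ne.symm hx'y', hxy]) _ mem_of_mem_filter_pair

lemma filter_dedup (p : α → Bool) : ∀ l : List α, (l.dedup).filter p = (l.filter p).dedup := by
  intro l
  induction l with
  | nil => rfl
  | cons a l ih =>
    by_cases hp : p a
    · by_cases hm : a ∈ l
      · rw [dedup_cons_of_mem hm, filter_cons, if_pos hp,
          dedup_cons_of_mem (mem_filter.2 ⟨hm, hp⟩), ih]
      · have hm' : a ∉ l.filter p := fun hc => hm (mem_filter.1 hc).1
        rw [dedup_cons_of_notMem hm, filter_cons, if_pos hp, filter_cons, if_pos hp,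
          dedup_cons_of_notMem hm', ih]
    · have hp' : p a = false := by simpa using hp
      by_cases hm : a ∈ l
      · rw [dedup_cons_of_mem hm, filter_cons, hp', ih]; simp
      · rw [dedup_cons_of_notMem hm, filter_cons, hp', filter_cons, hp', ih]; simp
lemma pump_word {G : SimpleGraph α} {w : List α} {k : ℕ}
    (hr : Represents w G) (hu : IsKUniform w k) :
    Represents (w ++ w.dedup) G ∧ IsKUniform (w ++ w.dedup) (k+1) := by
  obtain ⟨hmem, hadj⟩ := hr
  have hcnt : ∀ v, count v (w ++ w.dedup) = k + 1 := by
    intro v; rw [count_append, hu v, count_dedup, if_pos (hmem v)]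
  refine ⟨⟨fun v => by have := hcnt v; rw [← count_pos_iff]; omega, ?_⟩, hcnt⟩
  intro a b hab
  rw [hadj a b hab]
  unfold Alternates
  rw [filter_append]
  constructor
  · intro h
    set f := w.filter (fun z => decide (z = a ∨ z = b)) with hf
    have hmemf : ∀ c ∈ f, c = a ∨ c = b := mem_of_mem_filter_pair
    have hcf : count a f = count b f := by
      rw [hf, count_filter_pair_left, count_filter_pair_right, hu a, hu b]
    have hd : (w.dedup).filter (fun z => decide (z = a ∨ z = b)) = f.dedup :=
      filter_dedup _ w
    rw [hd]
    have hj : 0 < count a f := by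
      rw [hf, count_filter_pair_left]
      exact count_pos_iff.2 (hmem a)
    rcases alt_char hab f hmemf h hcf with hp | hp
    · rw [hp, dedup_pat hab (hp ▸ hj), pat_append_pair]
      exact chain'_pat hab _
    · rw [hp, dedup_pat hab.symm (hp ▸ hj), pat_append_pair]
      exact chain'_pat hab.symm _
  · intro h
    exact (chain'_append.1 h).1

lemma pump_word_many {G : SimpleGraph α} {w : List α} {k : ℕ}
    (hr : Represents w G) (hu : IsKUniform w k) :
    ∀ j, ∃ w' : List α, IsKUniform w' (k + j) ∧ Represents w' G := by
  intro j
  induction j with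
  | zero => exact ⟨w, hu, hr⟩
  | succ j ih =>
    obtain ⟨w', hu', hr'⟩ := ih
    obtain ⟨hr'', hu''⟩ := pump_word hr' hu'
    exact ⟨w' ++ w'.dedup, hu'', hr''⟩

lemma count_flatten_perms (ps : List (List α)) (h : ∀ q ∈ ps, IsPermOn q) (v : α) :
    count v ps.flatten = ps.length := by
  induction ps with
  | nil => rfl
  | cons q ps ih =>
    rw [flatten_cons, count_append, ih (fun q hq => h q (mem_cons_of_mem _ hq)),
      count_eq_one_of_mem (h q (mem_cons_self)).1 ((h q (mem_cons_self)).2 v)]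
    simp [Nat.add_comm]

lemma nodup_two {a b : α} (hab : a ≠ b) {l : List α}
    (hmem : ∀ c ∈ l, c = a ∨ c = b) (hnd : l.Nodup) (ha : a ∈ l) (hb : b ∈ l) :
    l = [a, b] ∨ l = [b, a] := by
  have hca : count a l = 1 := count_eq_one_of_mem hnd ha
  have hcb : count b l = 1 := count_eq_one_of_mem hnd hb
  have hlen : l.length = 2 := by
    have h1 : l.length = countP (fun c => c == a) l + countP (fun c => ¬(c == a)) l :=
      (length_eq_countP_add_countP _).symm ▸ rfl
    have h2 : countP (fun c => ¬(c == a)) l = countP (fun c => c == b) l := by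
      apply countP_congr
      intro c hc
      rcases hmem c hc with rfl | rfl <;> simp [hab, hab.symm]
    rw [length_eq_countP_add_countP (fun c => c == a), h2]
    change count a l + count b l = 2
    omega
  match l, hlen with
  | [c1, c2], _ =>
    have h1 := hmem c1 (by simp)
    have h2 := hmem c2 (by simp)
    have h12 : c1 ≠ c2 := by
      intro h; rw [nodup_cons] at hnd; exact hnd.1 (by simp [h])
    rcases h1 with rfl | rfl <;> rcases h2 with rfl | rfl
    · exact absurd rfl h12
    · exact Or.inl rfl
    · exact Or.inr rfl
    · exact absurd rfl h12

lemma pump_perm {M : SimpleGraph α} {n : ℕ} [Nonempty α]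
    (h : PermRepresents M n) : PermRepresents M (n+1) := by
  obtain ⟨ps, hlen, hperm, hmemw, hadj⟩ := h
  have hpsne : ps ≠ [] := by
    rintro rfl
    obtain ⟨v⟩ := ‹Nonempty α›
    have := hmemw v; simp at this
  set p := ps.getLast hpsne with hp
  have hpperm : IsPermOn p := hperm _ (getLast_mem hpsne)
  have hflat : (ps ++ [p]).flatten = ps.flatten ++ p := by simp
  have hwcnt : ∀ v, count v ps.flatten = n := fun v => hlen ▸ count_flatten_perms ps hperm v
  have hn : 0 < n := by
    rw [← hlen]; exact length_pos_of_ne_nil hpsne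
  refine ⟨ps ++ [p], by simp [hlen], ?_, ?_, ?_⟩
  · intro q hq
    rcases mem_append.1 hq with hq | hq
    · exact hperm q hq
    · simp at hq; subst hq; exact hpperm
  · intro v
    rw [hflat]
    exact mem_append_left _ (hmemw v)
  · intro a b hab
    rw [hadj a b hab]
    unfold Alternates
    rw [hflat, filter_append]
    constructor
    · intro h
      set f := ps.flatten.filter (fun z => decide (z = a ∨ z = b)) with hf
      set fp := p.filter (fun z => decide (z = a ∨ z = b)) with hfp
      have hmemf : ∀ c ∈ f, c = a ∨ c = b := mem_of_mem_filter_pair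
      have hcfa : count a f = n := by rw [hf, count_filter_pair_left, hwcnt]
      have hcfb : count b f = n := by rw [hf, count_filter_pair_right, hwcnt]
      have hfp2 : fp = [a, b] ∨ fp = [b, a] := by
        apply nodup_two hab mem_of_mem_filter_pair (hpperm.1.filter _)
        · exact mem_filter.2 ⟨hpperm.2 a, by simp⟩
        · exact mem_filter.2 ⟨hpperm.2 b, by simp⟩
      -- f ends with the filtered last block
      have hsplit : ps.flatten = (ps.dropLast).flatten ++ p := by
        conv_lhs => rw [← dropLast_append_getLast hpsne]
        simp [hp]
      have hfsplit : f = (ps.dropLast).flatten.filter (fun z => decide (z = a ∨ z = b)) ++ fp := by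
        rw [hf, hsplit, filter_append]
      have hfpne : fp ≠ [] := by
        rcases hfp2 with h' | h' <;> simp [h']
      have hlast : f.getLast? = fp.getLast? := by
        rw [hfsplit, getLast?_append]
        cases hfp' : fp.getLast? with
        | none => exact absurd (getLast?_eq_none_iff.1 hfp') hfpne
        | some c => rfl
      rcases alt_char hab f hmemf h (hcfa.trans hcfb.symm) with hpat | hpat
      · have hfpat : f = pat n a b := by rw [hpat, hcfa]
        have hfpab : fp = [a, b] := by
          rcases hfp2 with h' | h'
          · exact h'
          · exfalso
            have h1 : f.getLast? = some b := by rw [hfpat]; exact getLast?_pat hn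
            have h2 : f.getLast? = some a := by rw [hlast, h']; rfl
            exact hab (Option.some_inj.1 (h2.symm.trans h1))
        rw [hfpat, hfpab, pat_append_pair]
        exact chain'_pat hab _
      · have hfpat : f = pat n b a := by rw [hpat, hcfa]
        have hfpab : fp = [b, a] := by
          rcases hfp2 with h' | h'
          · exfalso
            have h1 : f.getLast? = some a := by rw [hfpat]; exact getLast?_pat hn
            have h2 : f.getLast? = some b := by rw [hlast, h']; rfl
            exact hab (Option.some_inj.1 (h1.symm.trans h2))
          · exact h'
        rw [hfpat, hfpab, pat_append_pair]
        exact chain'_pat hab.symm _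
    · intro h
      exact (chain'_append.1 h).1

lemma pump_perm_many {M : SimpleGraph α} {n : ℕ} [Nonempty α]
    (h : PermRepresents M n) : ∀ j, PermRepresents M (n + j) := by
  intro j
  induction j with
  | zero => exact h
  | succ j ih => exact pump_perm ih
section Subst
variable {W V' : Type*} [DecidableEq W] [DecidableEq V']

def subst (a : W) : List W → List (List V') → List ({x : W // x ≠ a} ⊕ V')
  | [], _ => []
  | c :: w, ps =>
    if h : c = a then (ps.headI.map Sum.inr) ++ subst a w ps.tail
    else Sum.inl ⟨c, h⟩ :: subst a w ps

lemma subst_cons_pos {a : W} (w : List W) (ps : List (List V')) :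
    subst a (a :: w) ps = (ps.headI.map Sum.inr) ++ subst a w ps.tail := by
  rw [subst]; rw [dif_pos rfl]

lemma subst_cons_neg {a c : W} (h : ¬ c = a) (w : List W) (ps : List (List V')) :
    subst a (c :: w) ps = Sum.inl ⟨c, h⟩ :: subst a w ps := by
  rw [subst]; rw [dif_neg h]

lemma count_inr_map {a : W} (x : V') (p : List V') :
    count (Sum.inr x : {x : W // x ≠ a} ⊕ V') (p.map Sum.inr) = count x p := by
  induction p with
  | nil => rfl
  | cons z p ih =>
    by_cases hz : z = x
    · subst hz; rw [map_cons, count_cons_self, count_cons_self, ih]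
    · rw [map_cons, count_cons_of_ne₀ (fun hh => hz (Sum.inr_injective hh).symm),
        count_cons_of_ne₀ (fun hh => hz hh.symm), ih]

lemma count_inl_map_inr {a : W} (u : {x : W // x ≠ a}) (p : List V') :
    count (Sum.inl u : {x : W // x ≠ a} ⊕ V') (p.map Sum.inr) = 0 := by
  induction p with
  | nil => rfl
  | cons z p ih => rw [map_cons, count_cons_of_ne₀ Sum.inl_ne_inr, ih]

lemma subst_filter_inl {a : W} (u v : {x : W // x ≠ a}) :
    ∀ (w : List W) (ps : List (List V')),
      (subst a w ps).filter
          (fun z => decide (z = (Sum.inl u : {x : W // x ≠ a} ⊕ V') ∨ z = Sum.inl v)) =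
        (w.filter (fun z => decide (z = u.1 ∨ z = v.1))).map
          (fun c => if h : c = a then Sum.inl u else Sum.inl ⟨c, h⟩) := by
  intro w
  induction w with
  | nil => intro ps; rfl
  | cons c w ih =>
    intro ps
    by_cases h : c = a
    · subst h
      rw [subst_cons_pos, filter_append, filter_map]
      have h1 : ((fun z => decide (z = (Sum.inl u : {x : W // x ≠ c} ⊕ V') ∨ z = Sum.inl v)) ∘
          Sum.inr) = fun _ => false := by
        funext z; simp
      rw [h1, filter_false, map_nil, nil_append, filter_cons]
      have h2 : (decide (c = u.1 ∨ c = v.1)) = false := by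
        simp only [decide_eq_false_iff_not]
        rintro (hh | hh)
        · exact u.2 hh.symm
        · exact v.2 hh.symm
      rw [h2]
      simpa using ih ps.tail
    · rw [subst_cons_neg h, filter_cons, filter_cons]
      by_cases hc : c = u.1 ∨ c = v.1
      · have e1 : (decide ((Sum.inl ⟨c, h⟩ : {x : W // x ≠ a} ⊕ V') = Sum.inl u ∨
            (Sum.inl ⟨c, h⟩ : {x : W // x ≠ a} ⊕ V') = Sum.inl v)) = true := by
          simp only [decide_eq_true_eq, Sum.inl.injEq]
          rcases hc with h' | h'
          · exact Or.inl (Subtype.ext h')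
          · exact Or.inr (Subtype.ext h')
        have e2 : (decide (c = u.1 ∨ c = v.1)) = true := by simpa using hc
        rw [e1, e2]
        simp only [if_true, map_cons]
        rw [ih ps]
        congr 1
        rw [dif_neg h]
      · have e1 : (decide ((Sum.inl ⟨c, h⟩ : {x : W // x ≠ a} ⊕ V') = Sum.inl u ∨
            (Sum.inl ⟨c, h⟩ : {x : W // x ≠ a} ⊕ V') = Sum.inl v)) = false := by
          simp only [decide_eq_false_iff_not, Sum.inl.injEq]
          rintro (h' | h')
          · exact hc (Or.inl (congrArg Subtype.val h'))
          · exact hc (Or.inr (congrArg Subtype.val h'))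
        have e2 : (decide (c = u.1 ∨ c = v.1)) = false := by simpa using hc
        rw [e1, e2]
        simpa using ih ps

lemma subst_filter_mixed {a : W} (u : {x : W // x ≠ a}) (x : V') :
    ∀ (w : List W) (ps : List (List V')), count a w = ps.length →
      (∀ p ∈ ps, IsPermOn p) →
      (subst a w ps).filter
          (fun z => decide (z = (Sum.inl u : {x : W // x ≠ a} ⊕ V') ∨ z = Sum.inr x)) =
        (w.filter (fun z => decide (z = u.1 ∨ z = a))).map
          (fun c => if h : c = a then Sum.inr x else Sum.inl ⟨c, h⟩) := by
  intro w
  induction w with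
  | nil => intro ps _ _; rfl
  | cons c w ih =>
    intro ps hcnt hperm
    by_cases h : c = a
    · subst h
      rw [count_cons_self] at hcnt
      cases ps with
      | nil => simp at hcnt
      | cons p ps' =>
        rw [subst_cons_pos, filter_append, filter_map]
        have hp : IsPermOn p := hperm p (mem_cons_self)
        have h1 : ((fun z => decide (z = (Sum.inl u : {x : W // x ≠ c} ⊕ V') ∨ z = Sum.inr x)) ∘
            Sum.inr) = fun y => decide (y = x) := by
          funext y; simp
        rw [h1]
        have h1' : (p.filter fun y => decide (y = x)) = [x] := by
          rw [filter_eq (l := p) x, count_eq_one_of_mem hp.1 (hp.2 x), replicate_one]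
        rw [show (p :: ps' : List (List V')).headI = p from rfl, h1']
        rw [filter_cons]
        have h2 : (decide (c = u.1 ∨ c = c)) = true := by simp
        rw [h2]
        simp only [if_true, map_cons, map_singleton, singleton_append]
        rw [show (p :: ps' : List (List V')).tail = ps' from rfl]
        rw [ih ps' (by simpa using hcnt) (fun q hq => hperm q (mem_cons_of_mem _ hq))]
        simp
    · rw [subst_cons_neg h]
      have hcnt' : count a w = ps.length := by
        rwa [count_cons_of_ne₀ (fun hh => h hh.symm)] at hcnt
      rw [filter_cons, filter_cons]
      by_cases hc : c = u.1
      · have e1 : (decide ((Sum.inl ⟨c, h⟩ : {x : W // x ≠ a} ⊕ V') = Sum.inl u ∨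
            (Sum.inl ⟨c, h⟩ : {x : W // x ≠ a} ⊕ V') = Sum.inr x)) = true := by
          simp only [decide_eq_true_eq, Sum.inl.injEq]
          exact Or.inl (Subtype.ext hc)
        have e2 : (decide (c = u.1 ∨ c = a)) = true := by simp [hc]
        rw [e1, e2]
        simp only [if_true, map_cons]
        rw [ih ps hcnt' hperm]
        congr 1
        rw [dif_neg h]
      · have e1 : (decide ((Sum.inl ⟨c, h⟩ : {x : W // x ≠ a} ⊕ V') = Sum.inl u ∨
            (Sum.inl ⟨c, h⟩ : {x : W // x ≠ a} ⊕ V') = Sum.inr x)) = false := by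
          simp only [decide_eq_false_iff_not, Sum.inl.injEq]
          rintro (h' | h')
          · exact hc (congrArg Subtype.val h')
          · exact Sum.inl_ne_inr h'
        have e2 : (decide (c = u.1 ∨ c = a)) = false := by
          simp only [decide_eq_false_iff_not]
          rintro (hh | hh)
          · exact hc hh
          · exact h hh
        rw [e1, e2]
        exact ih ps hcnt' hperm

lemma subst_filter_inr {a : W} (x y : V') :
    ∀ (w : List W) (ps : List (List V')), count a w = ps.length →
      (subst a w ps).filter
          (fun z => decide (z = (Sum.inr x : {x : W // x ≠ a} ⊕ V') ∨ z = Sum.inr y)) =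
        (ps.flatten.filter (fun z => decide (z = x ∨ z = y))).map Sum.inr := by
  intro w
  induction w with
  | nil =>
    intro ps hcnt
    rw [eq_nil_of_length_eq_zero hcnt.symm]
    rfl
  | cons c w ih =>
    intro ps hcnt
    by_cases h : c = a
    · subst h
      rw [count_cons_self] at hcnt
      cases ps with
      | nil => simp at hcnt
      | cons p ps' =>
        rw [subst_cons_pos, filter_append, filter_map]
        rw [show (p :: ps' : List (List V')).headI = p from rfl,
          show (p :: ps' : List (List V')).tail = ps' from rfl]
        rw [flatten_cons, filter_append, map_append]
        rw [show ((fun z => decide (z = (Sum.inr x : {x : W // x ≠ c} ⊕ V') ∨ z = Sum.inr y)) ∘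
            Sum.inr) = (fun z => decide (z = x ∨ z = y)) from by funext z; simp]
        rw [ih ps' (by simpa using hcnt)]
    · rw [subst_cons_neg h, filter_cons]
      have e1 : (decide ((Sum.inl ⟨c, h⟩ : {x : W // x ≠ a} ⊕ V') = Sum.inr x ∨
          (Sum.inl ⟨c, h⟩ : {x : W // x ≠ a} ⊕ V') = Sum.inr y)) = false := by simp
      rw [e1]
      exact ih ps (by rwa [count_cons_of_ne₀ (fun hh => h hh.symm)] at hcnt)

lemma subst_count_inl {a : W} (u : {x : W // x ≠ a}) :
    ∀ (w : List W) (ps : List (List V')),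
      count (Sum.inl u : {x : W // x ≠ a} ⊕ V') (subst a w ps) = count u.1 w := by
  intro w
  induction w with
  | nil => intro ps; rfl
  | cons c w ih =>
    intro ps
    by_cases h : c = a
    · subst h
      rw [subst_cons_pos, count_append, count_cons_of_ne₀ u.2]
      rw [count_inl_map_inr, Nat.zero_add, ih]
    · by_cases hc : c = u.1
      · have h1 : (Sum.inl ⟨c, h⟩ : {x : W // x ≠ a} ⊕ V') = Sum.inl u :=
          congrArg Sum.inl (Subtype.ext hc)
        rw [subst_cons_neg h, h1, count_cons_self, ih, hc, count_cons_self]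
      · rw [subst_cons_neg h,
          count_cons_of_ne₀ (fun hh => hc (congrArg Subtype.val (Sum.inl_injective hh)).symm),
          count_cons_of_ne₀ (fun hh => hc hh.symm), ih]

lemma subst_count_inr {a : W} (x : V') :
    ∀ (w : List W) (ps : List (List V')), count a w = ps.length →
      (∀ p ∈ ps, IsPermOn p) →
      count (Sum.inr x : {x : W // x ≠ a} ⊕ V') (subst a w ps) = count a w := by
  intro w
  induction w with
  | nil => intro ps _ _; rfl
  | cons c w ih =>
    intro ps hcnt hperm
    by_cases h : c = a
    · subst h
      rw [count_cons_self] at hcnt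
      cases ps with
      | nil => simp at hcnt
      | cons p ps' =>
        rw [subst_cons_pos, count_append, count_cons_self]
        rw [show (p :: ps' : List (List V')).headI = p from rfl,
          show (p :: ps' : List (List V')).tail = ps' from rfl]
        have hp : IsPermOn p := hperm p (mem_cons_self)
        rw [count_inr_map, count_eq_one_of_mem hp.1 (hp.2 x),
          ih ps' (by simpa using hcnt) (fun q hq => hperm q (mem_cons_of_mem _ hq))]
        omega
    · rw [subst_cons_neg h, count_cons_of_ne₀ (by simp), count_cons_of_ne₀ (fun hh => h hh.symm)]
      exact ih ps (by rwa [count_cons_of_ne₀ (fun hh => h hh.symm)] at hcnt) hperm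

end Subst
section Chunks
variable {V' : Type*} [DecidableEq V']

def chunks1 : List (Option V') → List V' × List (List V')
  | [] => ([], [])
  | none :: l => ([], (chunks1 l).1 :: (chunks1 l).2)
  | some x :: l => (x :: (chunks1 l).1, (chunks1 l).2)

lemma chunks1_flatten : ∀ s : List (Option V'),
    (chunks1 s).1 ++ ((chunks1 s).2).flatten = s.reduceOption := by
  intro s
  induction s with
  | nil => rfl
  | cons c s ih =>
    match c with
    | none =>
      rw [show chunks1 (none :: s) = ([], (chunks1 s).1 :: (chunks1 s).2) from rfl,
        reduceOption_cons_of_none]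
      simpa using ih
    | some z =>
      rw [show chunks1 (some z :: s) = (z :: (chunks1 s).1, (chunks1 s).2) from rfl,
        reduceOption_cons_of_some]
      simpa using ih

lemma chunks1_length : ∀ s : List (Option V'),
    ((chunks1 s).2).length = count none s := by
  intro s
  induction s with
  | nil => rfl
  | cons c s ih =>
    match c with
    | none =>
      rw [show chunks1 (none :: s) = ([], (chunks1 s).1 :: (chunks1 s).2) from rfl,
        count_cons_self]
      simpa using ih
    | some z =>
      rw [show chunks1 (some z :: s) = (z :: (chunks1 s).1, (chunks1 s).2) from rfl,
        count_cons_of_ne₀ (Option.some_ne_none z).symm]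
      simpa using ih

lemma chunkCD (x : V') : ∀ s : List (Option V'),
    (Chain' (· ≠ ·) (s.filter (fun z => decide (z = some x ∨ z = none))) →
      count (some x) s = count none s + 1 →
      count x (chunks1 s).1 = 1 ∧ ∀ r ∈ (chunks1 s).2, count x r = 1)
  ∧ (Chain' (· ≠ ·) (s.filter (fun z => decide (z = some x ∨ z = none))) →
      count (some x) s = count none s →
      (∀ c ∈ (s.filter (fun z => decide (z = some x ∨ z = none))).head?, c ≠ some x) →
      count x (chunks1 s).1 = 0 ∧ ∀ r ∈ (chunks1 s).2, count x r = 1) := by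
  intro s
  induction s with
  | nil =>
    constructor
    · intro _ hc; simp at hc
    · intro _ _ _
      exact ⟨rfl, fun r hr => absurd hr not_mem_nil⟩
  | cons c s ih =>
    obtain ⟨ihC, ihD⟩ := ih
    match c with
    | none =>
      have hfil : (none :: s).filter (fun z => decide (z = some x ∨ z = none)) =
          none :: s.filter (fun z => decide (z = some x ∨ z = none)) := by
        rw [filter_cons]; simp
      constructor
      · intro hch hcnt
        exfalso
        rw [hfil] at hch
        have hch' : Chain' (· ≠ ·) (s.filter (fun z => decide (z = some x ∨ z = none))) :=
          (chain'_cons'.1 hch).2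
        have hb := alt_count_le (x := some x) (y := (none : Option V'))
          (by simp) _ mem_of_mem_filter_pair hch'
        rw [count_filter_pair_left, count_filter_pair_right] at hb
        rw [count_cons_of_ne₀ (Option.some_ne_none _), count_cons_self] at hcnt
        omega
      · intro hch hcnt _
        rw [hfil] at hch
        rw [count_cons_of_ne₀ (Option.some_ne_none _), count_cons_self] at hcnt
        have hC := ihC (chain'_cons'.1 hch).2 (by omega)
        rw [show chunks1 (none :: s) = ([], (chunks1 s).1 :: (chunks1 s).2) from rfl]
        refine ⟨rfl, ?_⟩
        intro r hr
        rcases mem_cons.1 hr with rfl | hr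
        · exact hC.1
        · exact hC.2 r hr
    | some z =>
      by_cases hz : z = x
      · subst hz
        have hfil : (some z :: s).filter (fun z' => decide (z' = some z ∨ z' = none)) =
            some z :: s.filter (fun z' => decide (z' = some z ∨ z' = none)) := by
          rw [filter_cons]; simp
        constructor
        · intro hch hcnt
          rw [hfil] at hch
          rw [count_cons_self, count_cons_of_ne₀ (Option.some_ne_none _).symm] at hcnt
          have hhd : ∀ c' ∈ (s.filter (fun z' => decide (z' = some z ∨ z' = none))).head?,
              c' ≠ some z := by
            intro c' hc' he
            exact (chain'_cons'.1 hch).1 c' hc' he.symm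
          have hD := ihD (chain'_cons'.1 hch).2 (by omega) hhd
          rw [show chunks1 (some z :: s) = (z :: (chunks1 s).1, (chunks1 s).2) from rfl]
          refine ⟨?_, hD.2⟩
          rw [count_cons_self, hD.1]
        · intro hch hcnt hhd
          exfalso
          rw [hfil] at hhd
          exact hhd (some z) rfl rfl
      · have hfil : (some z :: s).filter (fun z' => decide (z' = some x ∨ z' = none)) =
            s.filter (fun z' => decide (z' = some x ∨ z' = none)) := by
          rw [filter_cons]
          simp [hz]
        have hcc : ∀ n, count (some x) (some z :: s) = n ↔ count (some x) s = n := by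
          intro n
          rw [count_cons_of_ne₀ (fun hh => hz (Option.some_inj.1 hh).symm)]
        constructor
        · intro hch hcnt
          rw [hfil] at hch
          rw [count_cons_of_ne₀ (fun hh => hz (Option.some_inj.1 hh).symm),
            count_cons_of_ne₀ (Option.some_ne_none _).symm] at hcnt
          have hC := ihC hch hcnt
          rw [show chunks1 (some z :: s) = (z :: (chunks1 s).1, (chunks1 s).2) from rfl]
          refine ⟨?_, hC.2⟩
          rw [count_cons_of_ne₀ (fun hh => hz hh.symm), hC.1]
        · intro hch hcnt hhd
          rw [hfil] at hch hhd
          rw [count_cons_of_ne₀ (fun hh => hz (Option.some_inj.1 hh).symm),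
            count_cons_of_ne₀ (Option.some_ne_none _).symm] at hcnt
          have hD := ihD hch hcnt hhd
          rw [show chunks1 (some z :: s) = (z :: (chunks1 s).1, (chunks1 s).2) from rfl]
          refine ⟨?_, hD.2⟩
          rw [count_cons_of_ne₀ (fun hh => hz hh.symm), hD.1]

lemma exists_last_split {c : V'} : ∀ {l : List V'}, c ∈ l →
    ∃ l₁ l₂, l = l₁ ++ c :: l₂ ∧ c ∉ l₂ := by
  intro l
  induction l with
  | nil => intro h; simp at h
  | cons d l ih =>
    intro h
    by_cases hc : c ∈ l
    · obtain ⟨l₁, l₂, heq, hnm⟩ := ih hc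
      exact ⟨d :: l₁, l₂, by rw [heq]; rfl, hnm⟩
    · have : c = d := by
        rcases mem_cons.1 h with h' | h'
        · exact h'
        · exact absurd h' hc
      subst this
      exact ⟨[], l, rfl, hc⟩

end Chunks

lemma alternates_comm {α : Type*} [DecidableEq α] (w : List α) (a b : α) :
    Alternates w a b ↔ Alternates w b a := by
  unfold Alternates
  rw [filter_congr (fun x _ => decide_eq_decide.2 (or_comm (a := x = a) (b := x = b)))]

end Stmt8Aux



attribute [local instance 2000] instBEqOfDecidableEq

/-- if `G` is connected word-representable with representation number `k` and
`M` is a comparability graph with permutation-representation number `k'`, then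
`R(G_a[M]) = max {k, k'}`. -/
theorem stmt8 {W V' : Type*} [DecidableEq W] [DecidableEq V'] [Fintype W] [Fintype V']
    [Nonempty V'] (G : SimpleGraph W) (a : W) (M : SimpleGraph V')
    (hc : G.Connected) (hV : ∃ x : W, x ≠ a)
    (hM : IsComparability M) (k k' : ℕ)
    (hk : RepNumIs G k) (hk' : PrnIs M k') :
    RepNumIs (substGraph G a M) (max k k') := by
  classical
  obtain ⟨⟨w₀, hu₀, hr₀⟩, hklb⟩ := hk
  obtain ⟨hpm, hk'lb⟩ := hk'
  obtain ⟨v0⟩ := ‹Nonempty V'›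
  have hk1 : 1 ≤ k := by
    have h1 := hu₀ a
    have h2 : 0 < List.count a w₀ := List.count_pos_iff.2 (hr₀.1 a)
    omega
  set m := max k k' with hm
  have hkm : k + (m - k) = m := Nat.add_sub_cancel' (le_max_left k k')
  have hk'm : k' + (m - k') = m := Nat.add_sub_cancel' (le_max_right k k')
  have hm1 : 1 ≤ m := le_trans hk1 (le_max_left k k')
  obtain ⟨w, hwu', hwr⟩ := Stmt8Aux.pump_word_many hr₀ hu₀ (m - k)
  rw [hkm] at hwu'
  have hpm2 := Stmt8Aux.pump_perm_many hpm (m - k')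
  rw [hk'm] at hpm2
  obtain ⟨ps, hplen, hpperm, hpsmem, hpsadj⟩ := hpm2
  have hcaw : List.count a w = ps.length := by rw [hwu' a, hplen]
  set WORD := Stmt8Aux.subst a w ps with hWORD
  have hWu : IsKUniform WORD m := by
    intro v
    match v with
    | Sum.inl u => rw [hWORD, Stmt8Aux.subst_count_inl u w ps, hwu' u.1]
    | Sum.inr x => rw [hWORD, Stmt8Aux.subst_count_inr x w ps hcaw hpperm, hwu' a]
  have hWr : Represents WORD (substGraph G a M) := by
    constructor
    · intro v
      have := hWu v
      rw [← List.count_pos_iff]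
      omega
    · intro p q hpq
      match p, q with
      | Sum.inl u, Sum.inl v =>
        have huv : u ≠ v := fun h => hpq (congrArg Sum.inl h)
        have huv1 : u.1 ≠ v.1 := fun h => huv (Subtype.ext h)
        have hadj : (substGraph G a M).Adj (Sum.inl u) (Sum.inl v) = G.Adj u.1 v.1 := rfl
        rw [hadj, hwr.2 u.1 v.1 huv1]
        unfold Alternates
        rw [hWORD, Stmt8Aux.subst_filter_inl u v w ps]
        refine (Stmt8Aux.chain'_map_ne_iff _ ?_ _ Stmt8Aux.mem_of_mem_filter_pair).symm
        rw [dif_neg u.2, dif_neg v.2]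
        intro hh
        exact huv1 (congrArg Subtype.val (Sum.inl_injective hh))
      | Sum.inl u, Sum.inr x =>
        have hadj : (substGraph G a M).Adj (Sum.inl u) (Sum.inr x) = G.Adj u.1 a := rfl
        rw [hadj, hwr.2 u.1 a u.2]
        unfold Alternates
        rw [hWORD, Stmt8Aux.subst_filter_mixed u x w ps hcaw hpperm]
        refine (Stmt8Aux.chain'_map_ne_iff _ ?_ _ Stmt8Aux.mem_of_mem_filter_pair).symm
        rw [dif_neg u.2, dif_pos rfl]
        exact Sum.inl_ne_inr
      | Sum.inr x, Sum.inl u =>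
        have hadj : (substGraph G a M).Adj (Sum.inr x) (Sum.inl u) = G.Adj a u.1 := rfl
        rw [hadj, Stmt8Aux.alternates_comm, G.adj_comm a u.1, hwr.2 u.1 a u.2]
        unfold Alternates
        rw [hWORD, Stmt8Aux.subst_filter_mixed u x w ps hcaw hpperm]
        refine (Stmt8Aux.chain'_map_ne_iff _ ?_ _ Stmt8Aux.mem_of_mem_filter_pair).symm
        rw [dif_neg u.2, dif_pos rfl]
        exact Sum.inl_ne_inr
      | Sum.inr x, Sum.inr y =>
        have hxy : x ≠ y := fun h => hpq (congrArg Sum.inr h)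
        have hadj : (substGraph G a M).Adj (Sum.inr x) (Sum.inr y) = M.Adj x y := rfl
        rw [hadj, hpsadj x y hxy]
        unfold Alternates
        rw [hWORD, Stmt8Aux.subst_filter_inr x y w ps hcaw]
        refine (Stmt8Aux.chain'_map_ne_iff _ ?_ _ Stmt8Aux.mem_of_mem_filter_pair).symm
        exact fun hh => hxy (Sum.inr_injective hh)
  constructor
  · exact ⟨WORD, hWu, hWr⟩
  · intro n hn
    obtain ⟨w', hwu'', hwr'⟩ := hn
    have hn1 : 1 ≤ n := by
      have h1 := hwu'' (Sum.inr v0 : {x : W // x ≠ a} ⊕ V')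
      have h2 : 0 < List.count (Sum.inr v0 : {x : W // x ≠ a} ⊕ V') w' :=
        List.count_pos_iff.2 (hwr'.1 _)
      omega
    refine max_le ?_ ?_
    · -- k ≤ n
      apply hklb
      set ρ : ({x : W // x ≠ a} ⊕ V') → Option W := Sum.elim (fun u => some u.1)
        (fun x => if x = v0 then some a else none) with hρ
      set wG := w'.filterMap ρ with hwG
      have hcount : ∀ c : W, List.count c wG = n := by
        intro c
        by_cases hca : c = a
        · have hiff : ∀ s, ρ s = some c ↔ s = Sum.inr v0 := by
            rintro (u | x)
            · simp only [hρ, Sum.elim_inl, Option.some_inj]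
              constructor
              · intro h; exact absurd (h.trans hca) u.2
              · intro h; cases h
            · simp only [hρ, Sum.elim_inr]
              by_cases hx : x = v0
              · simp [hx, hca]
              · simp [hx]
          rw [hwG, Stmt8Aux.count_filterMap_eq _ _ _ hiff w', hwu'']
        · have hiff : ∀ s, ρ s = some c ↔ s = Sum.inl ⟨c, hca⟩ := by
            rintro (u | x)
            · simp only [hρ, Sum.elim_inl, Option.some_inj, Sum.inl.injEq]
              constructor
              · intro h; exact Subtype.ext h
              · intro h; exact congrArg Subtype.val h
            · simp only [hρ, Sum.elim_inr]
              constructor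
              · intro h
                by_cases hx : x = v0
                · rw [if_pos hx] at h
                  exact absurd (Option.some_inj.1 h).symm hca
                · rw [if_neg hx] at h; cases h
              · intro h; cases h
          rw [hwG, Stmt8Aux.count_filterMap_eq _ _ _ hiff w', hwu'']
      have hmemG : ∀ c : W, c ∈ wG := by
        intro c
        have := hcount c
        rw [← List.count_pos_iff]
        omega
      have hkey : ∀ c d : W, d ≠ a → (c = a ∨ c ≠ a) → True := fun _ _ _ _ => trivial
      refine ⟨wG, hcount, hmemG, ?_⟩
      have main : ∀ d : W, ∀ (hda : d ≠ a), G.Adj a d ↔ Alternates wG a d := by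
        intro d hda
        have hne : (Sum.inr v0 : {x : W // x ≠ a} ⊕ V') ≠ Sum.inl ⟨d, hda⟩ :=
          Sum.inr_ne_inl
        have h2 : ρ (Sum.inr v0) = some a := by simp [hρ]
        have h3 : ρ (Sum.inl ⟨d, hda⟩) = some d := by simp [hρ]
        have h1 : ∀ s, s ≠ Sum.inr v0 → s ≠ Sum.inl ⟨d, hda⟩ →
            ∀ b, ρ s = some b → b ≠ a ∧ b ≠ d := by
          rintro (u | x) hs1 hs2 b hb
          · simp only [hρ, Sum.elim_inl, Option.some_inj] at hb
            subst hb
            refine ⟨u.2, fun h => hs2 (congrArg Sum.inl (Subtype.ext h))⟩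
          · simp only [hρ, Sum.elim_inr] at hb
            by_cases hx : x = v0
            · exact absurd (hx ▸ rfl) hs1
            · rw [if_neg hx] at hb; cases hb
        have hiff2 := Stmt8Aux.alternates_filterMap ρ hne hda.symm h2 h3 h1 w'
        have hH := hwr'.2 (Sum.inr v0) (Sum.inl ⟨d, hda⟩) hne
        rw [hwG]
        exact hH.trans hiff2.symm
      intro c d hcd
      by_cases hca : c = a
      · by_cases hda : d = a
        · exact absurd (hca.trans hda.symm) hcd
        · rw [hca]
          exact main d hda
      · by_cases hda : d = a
        · rw [hda, G.adj_comm c a, Stmt8Aux.alternates_comm]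
          exact main c hca
        · have hne : (Sum.inl ⟨c, hca⟩ : {x : W // x ≠ a} ⊕ V') ≠ Sum.inl ⟨d, hda⟩ :=
            fun h => hcd (congrArg Subtype.val (Sum.inl_injective h))
          have h2 : ρ (Sum.inl ⟨c, hca⟩) = some c := by simp [hρ]
          have h3 : ρ (Sum.inl ⟨d, hda⟩) = some d := by simp [hρ]
          have h1 : ∀ s, s ≠ Sum.inl ⟨c, hca⟩ → s ≠ Sum.inl ⟨d, hda⟩ →
              ∀ b, ρ s = some b → b ≠ c ∧ b ≠ d := by
            rintro (u | x) hs1 hs2 b hb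
            · simp only [hρ, Sum.elim_inl, Option.some_inj] at hb
              subst hb
              exact ⟨fun h => hs1 (congrArg Sum.inl (Subtype.ext h)),
                fun h => hs2 (congrArg Sum.inl (Subtype.ext h))⟩
            · simp only [hρ, Sum.elim_inr] at hb
              by_cases hx : x = v0
              · rw [if_pos hx] at hb
                have hba' : b = a := (Option.some_inj.1 hb).symm
                subst hba'
                exact ⟨fun h => hca h.symm, fun h => hda h.symm⟩
              · rw [if_neg hx] at hb; cases hb
          have hiff2 := Stmt8Aux.alternates_filterMap ρ hne hcd h2 h3 h1 w'
          have hH := hwr'.2 (Sum.inl ⟨c, hca⟩) (Sum.inl ⟨d, hda⟩) hne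
          rw [hwG]
          exact hH.trans hiff2.symm
    · -- k' ≤ n
      apply hk'lb
      obtain ⟨x1, hx1⟩ := hV
      obtain ⟨b, hab⟩ : ∃ b, G.Adj a b := by
        obtain ⟨p⟩ := hc.preconnected a x1
        cases p with
        | nil => exact absurd rfl hx1
        | cons h q => exact ⟨_, h⟩
      have hba : b ≠ a := fun h => G.loopless.irrefl a (h ▸ hab)
      set bv : {x : W // x ≠ a} := ⟨b, hba⟩ with hbv
      set μ : ({x : W // x ≠ a} ⊕ V') → Option (Option V') :=
        Sum.elim (fun u => if u = bv then some none else none) (fun x => some (some x)) with hμ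
      set t := w'.filterMap μ with ht
      have hiffn : ∀ s, μ s = some none ↔ s = Sum.inl bv := by
        rintro (u | x)
        · simp only [hμ, Sum.elim_inl]
          by_cases hu : u = bv
          · simp [hu]
          · simp [hu]
        · simp [hμ]
      have hcnone : List.count (none : Option V') t = n := by
        rw [ht, Stmt8Aux.count_filterMap_eq _ _ _ hiffn w', hwu'']
      have hiffs : ∀ x : V', ∀ s, μ s = some (some x) ↔ s = Sum.inr x := by
        intro x
        rintro (u | y)
        · simp only [hμ, Sum.elim_inl]
          by_cases hu : u = bv
          · simp [hu]
          · simp [hu]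
        · simp [hμ]
      have hcsome : ∀ x : V', List.count (some x) t = n := by
        intro x
        rw [ht, Stmt8Aux.count_filterMap_eq _ _ _ (hiffs x) w', hwu'']
      have htalt : ∀ x : V', Alternates t (some x) none := by
        intro x
        have h1 : ∀ s, s ≠ Sum.inr x → s ≠ Sum.inl bv →
            ∀ b', μ s = some b' → b' ≠ some x ∧ b' ≠ none := by
          rintro (u | y) hs1 hs2 b' hb'
          · simp only [hμ, Sum.elim_inl] at hb'
            rw [if_neg (fun h => hs2 (congrArg Sum.inl h))] at hb'
            cases hb'
          · simp only [hμ, Sum.elim_inr, Option.some_inj] at hb'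
            subst hb'
            refine ⟨fun h => hs1 (congrArg Sum.inr (Option.some_inj.1 h)), Option.some_ne_none _⟩
        have hiff2 := Stmt8Aux.alternates_filterMap μ
          (x' := Sum.inr x) (y' := Sum.inl bv)
          Sum.inr_ne_inl (Option.some_ne_none _)
          (by simp [hμ]) (by simp [hμ]) h1 w'
        rw [ht, hiff2]
        exact (hwr'.2 (Sum.inr x) (Sum.inl bv) Sum.inr_ne_inl).1 hab
      have hnmem : (none : Option V') ∈ t := by
        apply List.count_pos_iff.1
        rw [hcnone]; omega
      obtain ⟨t₁, t₂, hteq, htnm⟩ := Stmt8Aux.exists_last_split hnmem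
      set s := t₂ ++ t₁ with hs
      have hct2 : List.count (none : Option V') t₂ = 0 := List.count_eq_zero.2 htnm
      have hcsn : ∀ x : V', List.count (some x) s = n := by
        intro x
        have hh := hcsome x
        rw [hteq, List.count_append,
          List.count_cons_of_ne (Option.some_ne_none _).symm] at hh
        rw [hs, List.count_append]
        omega
      have hcnn : List.count (none : Option V') s = n - 1 := by
        have hh := hcnone
        rw [hteq, List.count_append, List.count_cons_self, hct2] at hh
        rw [hs, List.count_append, hct2]
        omega
      have hchain : ∀ x : V',
          List.Chain' (· ≠ ·) (s.filter (fun z => decide (z = some x ∨ z = none))) := by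
        intro x
        have halt := htalt x
        rw [hteq] at halt
        unfold Alternates at halt
        rw [List.filter_append] at halt
        have hfc : (none :: t₂).filter (fun z => decide (z = some x ∨ z = none)) =
            none :: t₂.filter (fun z => decide (z = some x ∨ z = none)) := by
          rw [List.filter_cons]; simp
        rw [hfc] at halt
        have he : t₁.filter (fun z => decide (z = some x ∨ z = none)) ++
            (none :: t₂.filter (fun z => decide (z = some x ∨ z = none))) =
            t.filter (fun z => decide (z = some x ∨ z = none)) := by
          rw [hteq, List.filter_append, hfc]
        have hmem2 : ∀ c ∈ t₁.filter (fun z => decide (z = some x ∨ z = none)) ++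
            (none :: t₂.filter (fun z => decide (z = some x ∨ z = none))),
            c = some x ∨ c = none := by
          rw [he]
          exact Stmt8Aux.mem_of_mem_filter_pair
        have hcnt2 : List.count (some x) (t₁.filter (fun z => decide (z = some x ∨ z = none)) ++
            (none :: t₂.filter (fun z => decide (z = some x ∨ z = none)))) =
            List.count (none : Option V') (t₁.filter (fun z => decide (z = some x ∨ z = none)) ++
            (none :: t₂.filter (fun z => decide (z = some x ∨ z = none)))) := by
          rw [he, Stmt8Aux.count_filter_pair_left, Stmt8Aux.count_filter_pair_right,
            hcnone, hcsome]
        have hrot := Stmt8Aux.chain'_rot (x := some x) (y := (none : Option V'))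
          (Option.some_ne_none _) hmem2 hcnt2 halt
        have htl := hrot.tail
        rw [hs, List.filter_append]
        exact htl
      have hflat : ((Stmt8Aux.chunks1 s).1 :: (Stmt8Aux.chunks1 s).2).flatten =
          s.reduceOption := by
        rw [List.flatten_cons]
        exact Stmt8Aux.chunks1_flatten s
      set μ2 : ({x : W // x ≠ a} ⊕ V') → Option V' :=
        Sum.elim (fun _ => none) (fun x => some x) with hμ2
      set uw := w'.filterMap μ2 with huw
      have htred : t.reduceOption = uw := by
        rw [ht, huw]
        show (w'.filterMap μ).filterMap id = w'.filterMap μ2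
        rw [List.filterMap_filterMap]
        have hfn : (fun s => (μ s).bind id) = μ2 := by
          funext s
          rcases s with u | x
          · simp only [hμ, hμ2, Sum.elim_inl]
            by_cases hu : u = bv
            · simp [hu]
            · simp [hu]
          · simp [hμ, hμ2]
        rw [hfn]
      have hcu : ∀ x : V', List.count x uw = n := by
        intro x
        have hiffu : ∀ s, μ2 s = some x ↔ s = Sum.inr x := by
          rintro (u | y)
          · simp [hμ2]
          · simp [hμ2]
        rw [huw, Stmt8Aux.count_filterMap_eq _ _ _ hiffu w', hwu'']
      have hudecomp : uw = t₁.reduceOption ++ t₂.reduceOption := by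
        rw [← htred, hteq, List.reduceOption_append, List.reduceOption_cons_of_none]
      have hflat2 : ((Stmt8Aux.chunks1 s).1 :: (Stmt8Aux.chunks1 s).2).flatten =
          t₂.reduceOption ++ t₁.reduceOption := by
        rw [hflat, hs, List.reduceOption_append]
      have huwalt : ∀ x y : V', x ≠ y → (M.Adj x y ↔ Alternates uw x y) := by
        intro x y hxy
        have h1 : ∀ s, s ≠ Sum.inr x → s ≠ Sum.inr y →
            ∀ b', μ2 s = some b' → b' ≠ x ∧ b' ≠ y := by
          rintro (u | z) hs1 hs2 b' hb'
          · simp only [hμ2, Sum.elim_inl] at hb'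
            cases hb'
          · simp only [hμ2, Sum.elim_inr, Option.some_inj] at hb'
            subst hb'
            exact ⟨fun h => hs1 (congrArg Sum.inr h), fun h => hs2 (congrArg Sum.inr h)⟩
        have hiff2 := Stmt8Aux.alternates_filterMap μ2
          (x' := Sum.inr x) (y' := Sum.inr y)
          (fun h => hxy (Sum.inr_injective h)) hxy
          (by simp [hμ2]) (by simp [hμ2]) h1 w'
        have hH := hwr'.2 (Sum.inr x) (Sum.inr y) (fun h => hxy (Sum.inr_injective h))
        rw [huw]
        exact hH.trans hiff2.symm
      refine ⟨(Stmt8Aux.chunks1 s).1 :: (Stmt8Aux.chunks1 s).2, ?_, ?_, ?_, ?_⟩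
      · rw [List.length_cons, Stmt8Aux.chunks1_length, hcnn]
        omega
      · intro q hq
        constructor
        · rw [List.nodup_iff_count_le_one]
          intro x
          have hCD := (Stmt8Aux.chunkCD x s).1 (hchain x) (by rw [hcsn x, hcnn]; omega)
          rcases List.mem_cons.1 hq with rfl | hq'
          · exact le_of_eq hCD.1
          · exact le_of_eq (hCD.2 q hq')
        · intro x
          have hCD := (Stmt8Aux.chunkCD x s).1 (hchain x) (by rw [hcsn x, hcnn]; omega)
          rcases List.mem_cons.1 hq with rfl | hq'
          · apply List.count_pos_iff.1
            rw [hCD.1]; omega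
          · apply List.count_pos_iff.1
            rw [hCD.2 q hq']; omega
      · intro x
        rw [hflat2]
        apply List.count_pos_iff.1
        have hcc : List.count x (t₂.reduceOption ++ t₁.reduceOption) = n := by
          have hh := hcu x
          rw [hudecomp, List.count_append] at hh
          rw [List.count_append]
          omega
        rw [hcc]; omega
      · intro x y hxy
        rw [hflat2]
        have hro := Stmt8Aux.alternates_rotate_iff (l₁ := t₁.reduceOption)
          (l₂ := t₂.reduceOption) hxy (by rw [← hudecomp, hcu x, hcu y])
        rw [← hro, ← hudecomp]
        exact huwalt x y hxy
end
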